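/- arXiv:0707.4203 — 8 statements merged into one kernel-verified Lean document; each statement's English description precedes it below -/
import Mathlib

section
/- Let Φ be an N×d real matrix satisfying the Restricted Isometry Condition with parameters (3n, 0.2). Then every n-sparse vector x ∈ ℝ^d is the unique solution to the convex program min ‖u‖₁ subject to Φu = Φx; that is, for every u ∈ ℝ^d with Φu = Φx and u ≠ x, one has ‖u‖₁ > ‖x‖₁. -/
open Finset RealInnerProductSpace

set_option maxHeartbeats 4000000

noncomputable section

/-- A vector `v ∈ ℝ^d` is `m`-sparse if its support has at most `m` elements. -/
def msparse {d : ℕ} (m : ℕ) (v : EuclideanSpace ℝ (Fin d)) : Prop :=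
  (Finset.univ.filter fun i => v i ≠ 0).card ≤ m

/-- The Restricted Isometry Condition with parameters `(m, ε)`. -/
def RIC {N d : ℕ} (Φ : Matrix (Fin N) (Fin d) ℝ) (m : ℕ) (ε : ℝ) : Prop :=
  ∀ v : EuclideanSpace ℝ (Fin d), msparse m v →
    (1 - ε) * ‖v‖ ≤ ‖Matrix.toEuclideanLin Φ v‖ ∧
    ‖Matrix.toEuclideanLin Φ v‖ ≤ (1 + ε) * ‖v‖

/-- The support of a vector, as a `Finset`. -/
def suppF {d : ℕ} (v : EuclideanSpace ℝ (Fin d)) : Finset (Fin d) :=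
  Finset.univ.filter fun i => v i ≠ 0

/-- `restr S w = w|_S`: the vector equal to `w` on `S` and zero elsewhere. -/
def restr {d : ℕ} (S : Finset (Fin d)) (w : EuclideanSpace ℝ (Fin d)) :
    EuclideanSpace ℝ (Fin d) :=
  WithLp.toLp 2 (fun i => if i ∈ S then w i else 0)

/-- `colSpan Φ S = range(Φ_S)`: the span of the columns of `Φ` indexed by `S`. -/
def colSpan {N d : ℕ} (Φ : Matrix (Fin N) (Fin d) ℝ) (S : Finset (Fin d)) :
    Submodule ℝ (EuclideanSpace ℝ (Fin N)) :=
  Submodule.span ℝ ((fun j => (WithLp.toLp 2 (fun i => Φ i j) : EuclideanSpace ℝ (Fin N))) '' (S : Set (Fin d)))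

lemma normsq_eq {d : ℕ} (v : EuclideanSpace ℝ (Fin d)) : ‖v‖^2 = ∑ i, (v i)^2 := by
  rw [EuclideanSpace.norm_eq, Real.sq_sqrt (by positivity)]
  congr 1; ext i; rw [Real.norm_eq_abs, sq_abs]

lemma msparse_of_subset {d m : ℕ} {S : Finset (Fin d)} (hS : S.card ≤ m)
    {v : EuclideanSpace ℝ (Fin d)} (hv : ∀ i, i ∉ S → v i = 0) : msparse m v := by
  refine le_trans (Finset.card_le_card ?_) hS
  intro i hi
  rw [Finset.mem_filter] at hi
  by_contra hiS
  exact hi.2 (hv i hiS)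

lemma normsq_add_of_disjoint {d : ℕ} {v w : EuclideanSpace ℝ (Fin d)}
    (hd : ∀ i, v i = 0 ∨ w i = 0) : ‖v + w‖^2 = ‖v‖^2 + ‖w‖^2 := by
  simp only [normsq_eq, ← Finset.sum_add_distrib]
  refine Finset.sum_congr rfl fun i _ => ?_
  have : (v + w) i = v i + w i := rfl
  rw [this]
  rcases hd i with h | h <;> rw [h] <;> ring

lemma euclid_sum_apply {d : ℕ} {α : Type*} (s : Finset α) (F : α → EuclideanSpace ℝ (Fin d))
    (i : Fin d) : (∑ j ∈ s, F j) i = ∑ j ∈ s, F j i := by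
  classical

  induction s using Finset.induction_on with
  | empty => rfl
  | insert _ _ hnm ih =>
    rw [Finset.sum_insert hnm, Finset.sum_insert hnm, ← ih]
    rfl

lemma inner_bound_aux {N d n : ℕ} (Φ : Matrix (Fin N) (Fin d) ℝ) (hΦ : RIC Φ (3*n) 0.2)
    {S : Finset (Fin d)} (hS : S.card ≤ 3*n) {v w : EuclideanSpace ℝ (Fin d)}
    (hv : ∀ i, i ∉ S → v i = 0) (hw : ∀ i, i ∉ S → w i = 0)
    (hd : ∀ i, v i = 0 ∨ w i = 0) :
    ⟪Matrix.toEuclideanLin Φ v, Matrix.toEuclideanLin Φ w⟫ ≤ 0.2 * (‖v‖^2 + ‖w‖^2) := by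
  set L := Matrix.toEuclideanLin Φ with hL
  have hvw : ∀ i, i ∉ S → (v + w) i = 0 := fun i hi => by
    have : (v + w) i = v i + w i := rfl
    rw [this, hv i hi, hw i hi, add_zero]
  have hvw' : ∀ i, i ∉ S → (v - w) i = 0 := fun i hi => by
    have : (v - w) i = v i - w i := rfl
    rw [this, hv i hi, hw i hi, sub_zero]
  have h1 := (hΦ (v + w) (msparse_of_subset hS hvw)).2
  have h2 := (hΦ (v - w) (msparse_of_subset hS hvw')).1
  have e1 : ‖v + w‖^2 = ‖v‖^2 + ‖w‖^2 := normsq_add_of_disjoint hd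
  have e2 : ‖v - w‖^2 = ‖v‖^2 + ‖w‖^2 := by
    have hvw2 : v - w = v + (-w) := by abel
    rw [hvw2, normsq_add_of_disjoint (fun i => ?_), norm_neg]
    rcases hd i with h | h
    · exact Or.inl h
    · refine Or.inr ?_
      have : (-w) i = -(w i) := rfl
      rw [this, h, neg_zero]
  have polar : ⟪L v, L w⟫ = (‖L v + L w‖^2 - ‖L v - L w‖^2) / 4 := by
    have a1 := norm_add_sq_real (L v) (L w)
    have a2 := norm_sub_sq_real (L v) (L w)
    linarith
  have m1 : L v + L w = L (v + w) := (map_add L v w).symm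
  have m2 : L v - L w = L (v - w) := (map_sub L v w).symm
  rw [polar, m1, m2]
  have n1 : ‖L (v + w)‖^2 ≤ (1 + 0.2)^2 * ‖v + w‖^2 := by
    nlinarith [norm_nonneg (L (v + w)), norm_nonneg (v + w)]
  have n2 : (1 - 0.2)^2 * ‖v - w‖^2 ≤ ‖L (v - w)‖^2 := by
    nlinarith [norm_nonneg (L (v - w)), norm_nonneg (v - w)]
  rw [e1] at n1
  rw [e2] at n2
  nlinarith [norm_nonneg v, norm_nonneg w]

lemma inner_bound {N d n : ℕ} (Φ : Matrix (Fin N) (Fin d) ℝ) (hΦ : RIC Φ (3*n) 0.2)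
    {S : Finset (Fin d)} (hS : S.card ≤ 3*n) {v w : EuclideanSpace ℝ (Fin d)}
    (hv : ∀ i, i ∉ S → v i = 0) (hw : ∀ i, i ∉ S → w i = 0)
    (hd : ∀ i, v i = 0 ∨ w i = 0) :
    ⟪Matrix.toEuclideanLin Φ v, Matrix.toEuclideanLin Φ w⟫ ≤ 0.4 * (‖v‖ * ‖w‖) := by
  set L := Matrix.toEuclideanLin Φ with hL
  rcases eq_or_ne v 0 with rfl | hv0
  · simp
  rcases eq_or_ne w 0 with rfl | hw0
  · simp
  have hva : (0:ℝ) < ‖v‖ := norm_pos_iff.mpr hv0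
  have hwa : (0:ℝ) < ‖w‖ := norm_pos_iff.mpr hw0
  set v' : EuclideanSpace ℝ (Fin d) := ‖v‖⁻¹ • v with hv'
  set w' : EuclideanSpace ℝ (Fin d) := ‖w‖⁻¹ • w with hw'
  have hva' : ∀ i, i ∉ S → v' i = 0 := fun i hi => by
    have : v' i = ‖v‖⁻¹ * v i := rfl
    rw [this, hv i hi, mul_zero]
  have hwa' : ∀ i, i ∉ S → w' i = 0 := fun i hi => by
    have : w' i = ‖w‖⁻¹ * w i := rfl
    rw [this, hw i hi, mul_zero]
  have hd' : ∀ i, v' i = 0 ∨ w' i = 0 := fun i => by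
    rcases hd i with h | h
    · exact Or.inl (by show ‖v‖⁻¹ * v i = 0; rw [h, mul_zero])
    · exact Or.inr (by show ‖w‖⁻¹ * w i = 0; rw [h, mul_zero])
  have key := inner_bound_aux Φ hΦ hS hva' hwa' hd'
  have nv' : ‖v'‖ = 1 := by
    rw [hv', norm_smul, norm_inv, norm_norm, inv_mul_cancel₀ (ne_of_gt hva)]
  have nw' : ‖w'‖ = 1 := by
    rw [hw', norm_smul, norm_inv, norm_norm, inv_mul_cancel₀ (ne_of_gt hwa)]
  rw [nv', nw'] at key
  have expand : ⟪L v', L w'⟫ = ‖v‖⁻¹ * (‖w‖⁻¹ * ⟪L v, L w⟫) := by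
    rw [hv', hw', map_smul, map_smul, real_inner_smul_left, real_inner_smul_right]
  rw [expand] at key
  calc ⟪L v, L w⟫ = ‖v‖ * ‖w‖ * (‖v‖⁻¹ * (‖w‖⁻¹ * ⟪L v, L w⟫)) := by
        field_simp
    _ ≤ ‖v‖ * ‖w‖ * 0.4 := by
        apply mul_le_mul_of_nonneg_left _ (by positivity)
        linarith
    _ = 0.4 * (‖v‖ * ‖w‖) := by ring


lemma arith1 {A B W : ℝ} (hA : 0 ≤ A) (hW : 0 ≤ W)
    (h1 : (1 - 0.2) * A ≤ B) (h2 : B^2 ≤ 0.4 * A * W) : A ≤ 0.625 * W := by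
  have hB : 0 ≤ B := le_trans (by nlinarith) h1
  rcases eq_or_lt_of_le hA with h0 | h0
  · rw [← h0]; nlinarith
  · nlinarith

lemma block_bound {m n j : ℕ} (hn : 0 < n) (hj0 : j ≠ 0) (g : Fin m → ℝ)
    (hganti : Antitone g) (hgnn : ∀ i, 0 ≤ g i) {X : ℝ} (hXnn : 0 ≤ X)
    (hX : X^2 = ∑ i ∈ Finset.univ.filter (fun i : Fin m => (i:ℕ)/n = j), (g i)^2) :
    X * Real.sqrt n ≤ ∑ i ∈ Finset.univ.filter (fun i : Fin m => (i:ℕ)/n = (j-1)), g i := by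
  set I1 := Finset.univ.filter (fun i : Fin m => (i:ℕ)/n = j) with hI1
  set I0 := Finset.univ.filter (fun i : Fin m => (i:ℕ)/n = (j-1)) with hI0
  set S0 := ∑ i ∈ I0, g i with hS0
  set S1 := ∑ i ∈ I1, g i with hS1
  have hS0nn : 0 ≤ S0 := Finset.sum_nonneg fun i _ => hgnn i
  have hS1nn : 0 ≤ S1 := Finset.sum_nonneg fun i _ => hgnn i
  have hq : ∀ i ∈ I1, (n:ℝ) * g i ≤ S0 := by
    intro i hi
    have hdiv : (i:ℕ)/n = j := by
      have := hi
      simp only [hI1, Finset.mem_filter] at this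
      exact this.2
    have hge : n*j ≤ (i:ℕ) := by
      rw [mul_comm]
      exact (Nat.le_div_iff_mul_le hn).mp hdiv.ge
    have hKlt : ∀ l ∈ Finset.Ico (n*(j-1)) (n*j), l < m := by
      intro l hl
      exact lt_of_lt_of_le (Finset.mem_Ico.mp hl).2 (le_trans hge (le_of_lt i.isLt))
    set K := Finset.attachFin (Finset.Ico (n*(j-1)) (n*j)) hKlt with hK
    have hKsub : K ⊆ I0 := by
      intro l hl
      have hlmem : (l:ℕ) ∈ Finset.Ico (n*(j-1)) (n*j) := (Finset.mem_attachFin hKlt).mp hl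
      obtain ⟨hl1, hl2⟩ := Finset.mem_Ico.mp hlmem
      simp only [hI0, Finset.mem_filter]
      refine ⟨Finset.mem_univ _, ?_⟩
      apply Nat.div_eq_of_lt_le
      · rw [mul_comm]; exact hl1
      · have hjj : j - 1 + 1 = j := by omega
        rw [mul_comm, hjj]; exact hl2
    have hKcard : K.card = n := by
      rw [hK, Finset.card_attachFin, Nat.card_Ico]
      have h5 : n * j = n * (j-1) + n := by
        conv_lhs => rw [show j = (j-1)+1 by omega]
        rw [Nat.mul_succ]
      rw [h5, Nat.add_sub_cancel_left]
    have hgK : ∀ l ∈ K, g i ≤ g l := by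
      intro l hl
      have hlmem := (Finset.mem_attachFin hKlt).mp hl
      have hl2 := (Finset.mem_Ico.mp hlmem).2
      exact hganti (show l ≤ i from le_of_lt (by
        rw [Fin.lt_def]
        exact lt_of_lt_of_le hl2 hge))
    calc (n:ℝ) * g i = ∑ _l ∈ K, g i := by
          rw [Finset.sum_const, hKcard, nsmul_eq_mul]
      _ ≤ ∑ l ∈ K, g l := Finset.sum_le_sum hgK
      _ ≤ S0 := Finset.sum_le_sum_of_subset_of_nonneg hKsub (fun l _ _ => hgnn l)
  have hI1card : I1.card ≤ n := by
    have hsub : (I1.image Fin.val) ⊆ Finset.Ico (n*j) (n*j+n) := by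
      intro l hl
      obtain ⟨i, hi, rfl⟩ := Finset.mem_image.mp hl
      have hdiv : (i:ℕ)/n = j := by
        have := hi
        simp only [hI1, Finset.mem_filter] at this
        exact this.2
      have hd1 : n * ((i:ℕ)/n) + (i:ℕ) % n = (i:ℕ) := Nat.div_add_mod (i:ℕ) n
      rw [hdiv] at hd1
      have hd2 : (i:ℕ) % n < n := Nat.mod_lt _ hn
      rw [Finset.mem_Ico]
      constructor
      · calc n*j ≤ n*j + (i:ℕ)%n := Nat.le_add_right _ _
          _ = (i:ℕ) := hd1
      · rw [← hd1]
        exact Nat.add_lt_add_left hd2 _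
    calc I1.card = (I1.image Fin.val).card :=
          (Finset.card_image_of_injective _ Fin.val_injective).symm
      _ ≤ (Finset.Ico (n*j) (n*j+n)).card := Finset.card_le_card hsub
      _ = n := by rw [Nat.card_Ico]; omega
  have hSle : S1 ≤ S0 := by
    have hgle : ∀ i ∈ I1, g i ≤ S0 / n := by
      intro i hi
      rw [le_div_iff₀ (by exact_mod_cast hn)]
      linarith [hq i hi]
    calc S1 ≤ ∑ i ∈ I1, S0/n := Finset.sum_le_sum hgle
      _ = I1.card * (S0/n) := by rw [Finset.sum_const, nsmul_eq_mul]
      _ ≤ n * (S0/n) := by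
          apply mul_le_mul_of_nonneg_right _ (div_nonneg hS0nn (by positivity))
          exact_mod_cast hI1card
      _ = S0 := by field_simp
  have hsum2 : X^2 * n ≤ S0 * S1 := by
    rw [hX]
    calc (∑ i ∈ I1, (g i)^2) * (n:ℝ) = ∑ i ∈ I1, ((n:ℝ) * g i) * g i := by
          rw [Finset.sum_mul]
          exact Finset.sum_congr rfl fun i _ => by ring
      _ ≤ ∑ i ∈ I1, S0 * g i := Finset.sum_le_sum fun i hi =>
          mul_le_mul_of_nonneg_right (hq i hi) (hgnn i)
      _ = S0 * S1 := by rw [← Finset.mul_sum]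
  have hsqsq : Real.sqrt n ^ 2 = (n:ℝ) := Real.sq_sqrt (by positivity)
  have hsqnn : (0:ℝ) ≤ Real.sqrt n := Real.sqrt_nonneg _
  have h1 : (X * Real.sqrt n)^2 ≤ S0^2 := by
    rw [mul_pow, hsqsq]
    nlinarith [hSle, hS0nn, hS1nn, hsum2]
  nlinarith [h1, mul_nonneg hXnn hsqnn, hS0nn]

lemma conclude_lemma {P vN W z sq n : ℝ} (hPnn : 0 ≤ P) (hz : 0 < z)
    (hsqsq : sq^2 = n) (hsqpos : 0 < sq)
    (hP2 : P^2 ≤ n * vN^2) (hvle : vN ≤ 0.625*W) (hvnn : 0 ≤ vN) (hWnn : 0 ≤ W)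
    (hWz : W * sq ≤ z) : P < z := by
  have h1 : vN^2 ≤ 0.390625 * W^2 := by nlinarith
  have h2 : (W*sq)^2 ≤ z^2 := by nlinarith [mul_nonneg hWnn hsqpos.le]
  have h0 : P^2 ≤ sq^2 * vN^2 := by rw [hsqsq]; exact hP2
  have h4 : sq^2 * vN^2 ≤ sq^2 * (0.390625 * W^2) :=
    mul_le_mul_of_nonneg_left h1 (sq_nonneg sq)
  have h3 : P^2 ≤ 0.390625 * z^2 := by nlinarith [h0, h4, h2]
  nlinarith [h3, hPnn, hz]

/-- Sparse recovery under RIC: if `Φ` satisfies RIC with parameters `(3n, 0.2)`, then every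
`n`-sparse vector `x` is the unique minimizer of the `ℓ₁`-norm among vectors with the same
measurements: any other `u` with `Φu = Φx` has strictly larger `ℓ₁`-norm. -/
theorem sparse_recovery_via_L1 {N d n : ℕ} (Φ : Matrix (Fin N) (Fin d) ℝ)
    (hΦ : RIC Φ (3 * n) 0.2)
    (x : EuclideanSpace ℝ (Fin d)) (hx : msparse n x)
    (u : EuclideanSpace ℝ (Fin d))
    (hu : Matrix.toEuclideanLin Φ u = Matrix.toEuclideanLin Φ x)
    (hne : u ≠ x) :
    (∑ i, |x i|) < ∑ i, |u i| := by
  classical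
  set h : EuclideanSpace ℝ (Fin d) := u - x with hhdef
  have hΦh : Matrix.toEuclideanLin Φ h = 0 := by rw [hhdef, map_sub, hu, sub_self]
  have hhne : h ≠ 0 := sub_ne_zero.mpr hne
  have happ : ∀ i, h i = u i - x i := fun i => rfl
  set T0 : Finset (Fin d) := Finset.univ.filter (fun i => x i ≠ 0) with hT0def
  have hT0 : T0.card ≤ n := hx
  have hxoff : ∀ i, i ∉ T0 → x i = 0 := by
    intro i hi
    by_contra hxi
    exact hi (Finset.mem_filter.mpr ⟨Finset.mem_univ _, hxi⟩)
  have key : ∑ i ∈ T0, |h i| < ∑ i ∈ T0ᶜ, |h i| := by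
    set z := ∑ i ∈ T0ᶜ, |h i| with hzdef
    have hznn : (0:ℝ) ≤ z := Finset.sum_nonneg fun i _ => abs_nonneg _
    by_cases hz0 : z = 0
    · exfalso
      have hoff : ∀ i, i ∉ T0 → h i = 0 := by
        intro i hi
        have := (Finset.sum_eq_zero_iff_of_nonneg
          (fun i _ => abs_nonneg (h i))).mp hz0 i (Finset.mem_compl.mpr hi)
        exact abs_eq_zero.mp this
      have hsp : msparse (3*n) h := msparse_of_subset (le_trans hT0 (by omega)) hoff
      have hlow := (hΦ h hsp).1
      rw [hΦh, norm_zero] at hlow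
      have hn0 : ‖h‖ ≤ 0 := by nlinarith [norm_nonneg h]
      exact hhne (norm_le_zero_iff.mp hn0)
    have hzpos : 0 < z := lt_of_le_of_ne hznn (Ne.symm hz0)
    rcases Nat.eq_zero_or_pos n with hn | hn
    · have hT0e : T0 = ∅ := Finset.card_eq_zero.mp (Nat.le_antisymm (hn ▸ hT0) (Nat.zero_le _))
      rw [hT0e, Finset.sum_empty]
      exact hzpos
    -- main case
    set m := T0ᶜ.card with hmdef
    obtain ⟨E, hEinj, hEmem, hEsurj, hganti⟩ :
        ∃ E : Fin m → Fin d, Function.Injective E ∧ (∀ i, E i ∈ T0ᶜ) ∧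
          (∀ i ∈ T0ᶜ, ∃ i₀, E i₀ = i) ∧ Antitone (fun i => |h (E i)|) := by
      have e := T0ᶜ.equivFin
      set f : Fin m → ℝ := fun i => -|h ((e.symm i : {i // i ∈ T0ᶜ}) : Fin d)| with hf
      set σ := Tuple.sort f with hσ
      refine ⟨fun i => ((e.symm (σ i) : {i // i ∈ T0ᶜ}) : Fin d), ?_, ?_, ?_, ?_⟩
      · intro a b hab
        exact σ.injective (e.symm.injective (Subtype.val_injective hab))
      · intro i
        exact Finset.coe_mem _
      · intro i hi
        exact ⟨σ.symm (e ⟨i, hi⟩), by simp⟩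
      · intro p q hpq
        have := Tuple.monotone_sort f hpq
        simp only [Function.comp, hf] at this
        dsimp only
        linarith
    set g : Fin m → ℝ := fun i => |h (E i)| with hg
    have hgnn : ∀ i, 0 ≤ g i := fun i => abs_nonneg _
    set I : ℕ → Finset (Fin m) := fun j => Finset.univ.filter (fun i => (i:ℕ)/n = j) with hI
    set T : ℕ → Finset (Fin d) := fun j => (I j).image E with hT
    set H : ℕ → EuclideanSpace ℝ (Fin d) := fun j => restr (T j) h with hHdef
    set SS : ℕ → ℝ := fun j => ∑ i ∈ I j, g i with hSS
    set a : EuclideanSpace ℝ (Fin d) := restr T0 h with hadef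
    set v : EuclideanSpace ℝ (Fin d) := a + H 0 with hvdef
    have hSSnn : ∀ j, 0 ≤ SS j := fun j => Finset.sum_nonneg fun i _ => hgnn i
    have hIcard : ∀ j, (I j).card ≤ n := by
      intro j
      have hsub : ((I j).image Fin.val) ⊆ Finset.Ico (n*j) (n*j+n) := by
        intro l hl
        obtain ⟨i, hi, rfl⟩ := Finset.mem_image.mp hl
        have hq : (i:ℕ)/n = j := by
          have := hi
          simp only [hI, Finset.mem_filter] at this
          exact this.2
        have hd1 : n * ((i:ℕ)/n) + (i:ℕ) % n = (i:ℕ) := Nat.div_add_mod (i:ℕ) n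
        rw [hq] at hd1
        have hd2 : (i:ℕ) % n < n := Nat.mod_lt _ hn
        rw [Finset.mem_Ico]
        constructor
        · calc n*j ≤ n*j + (i:ℕ)%n := Nat.le_add_right _ _
            _ = (i:ℕ) := hd1
        · rw [← hd1]
          exact Nat.add_lt_add_left hd2 _
      calc (I j).card = ((I j).image Fin.val).card :=
            (Finset.card_image_of_injective _ Fin.val_injective).symm
        _ ≤ (Finset.Ico (n*j) (n*j+n)).card := Finset.card_le_card hsub
        _ = n := by rw [Nat.card_Ico]; omega
    have hTsub : ∀ j, T j ⊆ T0ᶜ := by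
      intro j i hi
      simp only [hT, Finset.mem_image] at hi
      obtain ⟨i₀, _, rfl⟩ := hi
      exact hEmem i₀
    have hTcard : ∀ j, (T j).card ≤ n := fun j =>
      le_trans Finset.card_image_le (hIcard j)
    have hmemT : ∀ j (i₀ : Fin m), E i₀ ∈ T j ↔ (i₀:ℕ)/n = j := by
      intro j i₀
      constructor
      · intro hi
        simp only [hT, Finset.mem_image] at hi
        obtain ⟨i₁, hi₁, he⟩ := hi
        rw [hEinj he] at hi₁
        simp only [hI, Finset.mem_filter] at hi₁
        exact hi₁.2
      · intro hq
        simp only [hT]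
        exact Finset.mem_image_of_mem E (by
          simp only [hI, Finset.mem_filter]
          exact ⟨Finset.mem_univ _, hq⟩)
    have hm1 : 0 < m := by
      rw [hmdef, Finset.card_pos]
      by_contra hne'
      rw [Finset.not_nonempty_iff_eq_empty] at hne'
      exact hz0 (by rw [hzdef, hne', Finset.sum_empty])
    have hTdisj : ∀ j j' i, i ∈ T j → i ∈ T j' → j = j' := by
      intro j j' i hij hij'
      have hij2 := hij
      simp only [hT, Finset.mem_image] at hij2
      obtain ⟨i₀, _, rfl⟩ := hij2
      have h1 := (hmemT j i₀).mp hij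
      have h2 := (hmemT j' i₀).mp hij'
      rw [← h1, ← h2]
    have hdecomp : h = v + ∑ j ∈ (Finset.range m).erase 0, H j := by
      ext i
      show h i = v i + (∑ j ∈ (Finset.range m).erase 0, H j) i
      rw [euclid_sum_apply]
      have hvi : v i = a i + H 0 i := rfl
      rw [hvi, add_assoc,
        Finset.add_sum_erase (Finset.range m) (fun j => H j i)
          (Finset.mem_range.mpr hm1)]
      by_cases hiT0 : i ∈ T0
      · have hai : a i = h i := by
          show (if i ∈ T0 then h i else 0) = h i
          rw [if_pos hiT0]
        have hHz : ∀ j ∈ Finset.range m, H j i = 0 := by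
          intro j _
          show (if i ∈ T j then h i else 0) = 0
          rw [if_neg (fun hmem => (Finset.mem_compl.mp (hTsub j hmem)) hiT0)]
        rw [hai, Finset.sum_eq_zero hHz, add_zero]
      · have hai : a i = 0 := by
          show (if i ∈ T0 then h i else 0) = 0
          rw [if_neg hiT0]
        obtain ⟨i₀, rfl⟩ := hEsurj i (Finset.mem_compl.mpr hiT0)
        have hterm : ∀ j ∈ Finset.range m,
            H j (E i₀) = if (i₀:ℕ)/n = j then h (E i₀) else 0 := by
          intro j _
          show (if E i₀ ∈ T j then h (E i₀) else 0) = _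
          by_cases hj : (i₀:ℕ)/n = j
          · rw [if_pos ((hmemT j i₀).mpr hj), if_pos hj]
          · rw [if_neg (fun hmem => hj ((hmemT j i₀).mp hmem)), if_neg hj]
        rw [hai, Finset.sum_congr rfl hterm, Finset.sum_ite_eq (Finset.range m) ((i₀:ℕ)/n)]
        rw [if_pos (Finset.mem_range.mpr (lt_of_le_of_lt (Nat.div_le_self _ _) i₀.isLt))]
        rw [zero_add]
    have hzS : z = ∑ j ∈ Finset.range m, SS j := by
      have h1 : T0ᶜ = Finset.univ.image E := by
        ext i
        simp only [Finset.mem_image, Finset.mem_univ, true_and]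
        constructor
        · intro hi; exact hEsurj i hi
        · rintro ⟨i₀, rfl⟩; exact hEmem i₀
      rw [hzdef, h1, Finset.sum_image (fun p _ q _ hpq => hEinj hpq)]
      exact (Finset.sum_fiberwise_of_maps_to
        (fun i _ => Finset.mem_range.mpr (lt_of_le_of_lt (Nat.div_le_self _ _) i.isLt))
        (fun i => |h (E i)|)).symm
    have hHsq : ∀ j, ‖H j‖^2 = ∑ i ∈ I j, (g i)^2 := by
      intro j
      have h1 : ∀ i, (H j i)^2 = if i ∈ T j then (h i)^2 else 0 := by
        intro i
        show (if i ∈ T j then h i else 0)^2 = _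
        split <;> simp
      rw [normsq_eq, Finset.sum_congr rfl fun i _ => h1 i, Finset.sum_ite_mem,
        Finset.univ_inter]
      show ∑ i ∈ (I j).image E, (h i)^2 = _
      rw [Finset.sum_image (fun p _ q _ hpq => hEinj hpq)]
      exact Finset.sum_congr rfl fun i _ => (sq_abs _).symm
    have hvoff : ∀ i, i ∉ T0 ∪ T 0 → v i = 0 := by
      intro i hi
      rw [Finset.mem_union] at hi
      push_neg at hi
      show (if i ∈ T0 then h i else 0) + (if i ∈ T 0 then h i else 0) = 0
      rw [if_neg hi.1, if_neg hi.2, add_zero]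
    have hvcard : (T0 ∪ T 0).card ≤ 2*n := by
      have := Finset.card_union_le T0 (T 0)
      have := hTcard 0
      omega
    have hvsp : msparse (3*n) v := msparse_of_subset (le_trans hvcard (by omega)) hvoff
    have hip : ∀ j ∈ (Finset.range m).erase 0,
        ⟪Matrix.toEuclideanLin Φ v, Matrix.toEuclideanLin Φ (-(H j))⟫
          ≤ 0.4*(‖v‖*‖H j‖) := by
      intro j hj
      have hj0 : j ≠ 0 := (Finset.mem_erase.mp hj).1
      have hcard : ((T0 ∪ T 0) ∪ T j).card ≤ 3*n := by
        have := Finset.card_union_le (T0 ∪ T 0) (T j)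
        have := hTcard j
        omega
      have hv' : ∀ i, i ∉ (T0 ∪ T 0) ∪ T j → v i = 0 := fun i hi =>
        hvoff i (fun hmem => hi (Finset.mem_union_left _ hmem))
      have hw' : ∀ i, i ∉ (T0 ∪ T 0) ∪ T j → (-(H j)) i = 0 := by
        intro i hi
        have hiTj : i ∉ T j := fun hmem => hi (Finset.mem_union_right _ hmem)
        show -(if i ∈ T j then h i else 0) = 0
        rw [if_neg hiTj, neg_zero]
      have hdisj : ∀ i, v i = 0 ∨ (-(H j)) i = 0 := by
        intro i
        by_cases hiTj : i ∈ T j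
        · left
          refine hvoff i ?_
          rw [Finset.mem_union]
          push_neg
          refine ⟨Finset.mem_compl.mp (hTsub j hiTj), fun hmem0 => ?_⟩
          exact hj0 (hTdisj j 0 i hiTj hmem0)
        · right
          show -(if i ∈ T j then h i else 0) = 0
          rw [if_neg hiTj, neg_zero]
      have := inner_bound Φ hΦ hcard hv' hw' hdisj
      rwa [norm_neg] at this
    set W := ∑ j ∈ (Finset.range m).erase 0, ‖H j‖ with hW
    have hWnn : 0 ≤ W := Finset.sum_nonneg fun j _ => norm_nonneg _
    have hPhiv : Matrix.toEuclideanLin Φ v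
        = ∑ j ∈ (Finset.range m).erase 0, Matrix.toEuclideanLin Φ (-(H j)) := by
      have h0 : (0 : EuclideanSpace ℝ (Fin N)) = Matrix.toEuclideanLin Φ v
          + ∑ j ∈ (Finset.range m).erase 0, Matrix.toEuclideanLin Φ (H j) := by
        rw [← hΦh]
        conv_lhs => rw [hdecomp]
        rw [map_add, map_sum]
      have h1 : Matrix.toEuclideanLin Φ v
          = -∑ j ∈ (Finset.range m).erase 0, Matrix.toEuclideanLin Φ (H j) := by
        rw [eq_neg_iff_add_eq_zero]
        exact h0.symm
      rw [h1, ← Finset.sum_neg_distrib]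
      exact Finset.sum_congr rfl fun j _ => (map_neg _ _).symm
    have hinner_sum : ∀ y : EuclideanSpace ℝ (Fin N),
        ⟪y, Matrix.toEuclideanLin Φ v⟫
          = ∑ j ∈ (Finset.range m).erase 0, ⟪y, Matrix.toEuclideanLin Φ (-(H j))⟫ := by
      intro y
      rw [hPhiv, inner_sum]
    have hnormPhi : ‖Matrix.toEuclideanLin Φ v‖^2 ≤ 0.4 * ‖v‖ * W := by
      calc ‖Matrix.toEuclideanLin Φ v‖^2
          = ⟪Matrix.toEuclideanLin Φ v, Matrix.toEuclideanLin Φ v⟫ :=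
            (real_inner_self_eq_norm_sq _).symm
        _ = ∑ j ∈ (Finset.range m).erase 0,
              ⟪Matrix.toEuclideanLin Φ v, Matrix.toEuclideanLin Φ (-(H j))⟫ :=
            hinner_sum _
        _ ≤ ∑ j ∈ (Finset.range m).erase 0, 0.4*(‖v‖*‖H j‖) := Finset.sum_le_sum hip
        _ = 0.4 * ‖v‖ * W := by
            rw [hW, Finset.mul_sum]
            exact Finset.sum_congr rfl fun j _ => by ring
    have hlow := (hΦ v hvsp).1
    have hvle : ‖v‖ ≤ 0.625 * W := arith1 (norm_nonneg v) hWnn hlow hnormPhi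
    have hHle : ∀ j ∈ (Finset.range m).erase 0, ‖H j‖ * Real.sqrt n ≤ SS (j-1) := by
      intro j hj
      have hj0 : j ≠ 0 := (Finset.mem_erase.mp hj).1
      exact block_bound hn hj0 g hganti hgnn (norm_nonneg (H j)) (hHsq j)
    have hWz : W * Real.sqrt n ≤ z := by
      have hstep : ∑ j ∈ (Finset.range m).erase 0, SS (j-1) ≤ ∑ j ∈ Finset.range m, SS j := by
        have herase : (Finset.range m).erase 0 = Finset.Ico 1 m := by
          ext j
          simp only [Finset.mem_erase, Finset.mem_Ico, Finset.mem_range]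
          omega
        rw [herase, Finset.sum_Ico_eq_sum_range]
        have hcong : ∀ i ∈ Finset.range (m-1), SS (1 + i - 1) = SS i := by
          intro i _
          congr 1
          omega
        rw [Finset.sum_congr rfl hcong]
        exact Finset.sum_le_sum_of_subset_of_nonneg
          (Finset.range_subset_range.mpr (by omega)) (fun j _ _ => hSSnn j)
      calc W * Real.sqrt n = ∑ j ∈ (Finset.range m).erase 0, ‖H j‖ * Real.sqrt n := by
            rw [hW, Finset.sum_mul]
        _ ≤ ∑ j ∈ (Finset.range m).erase 0, SS (j-1) := Finset.sum_le_sum hHle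
        _ ≤ ∑ j ∈ Finset.range m, SS j := hstep
        _ = z := hzS.symm
    -- ℓ¹ bound on T0 via Cauchy-Schwarz
    have hasq : ‖a‖^2 = ∑ i ∈ T0, (h i)^2 := by
      have h1 : ∀ i, (a i)^2 = if i ∈ T0 then (h i)^2 else 0 := by
        intro i
        show (if i ∈ T0 then h i else 0)^2 = _
        split <;> simp
      rw [normsq_eq, Finset.sum_congr rfl fun i _ => h1 i, Finset.sum_ite_mem,
        Finset.univ_inter]
    have hdisj0 : ∀ i, a i = 0 ∨ H 0 i = 0 := by
      intro i
      by_cases hiT0 : i ∈ T0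
      · right
        show (if i ∈ T 0 then h i else 0) = 0
        rw [if_neg (fun hmem => (Finset.mem_compl.mp (hTsub 0 hmem)) hiT0)]
      · left
        show (if i ∈ T0 then h i else 0) = 0
        rw [if_neg hiT0]
    have hv2 : ‖v‖^2 = ‖a‖^2 + ‖H 0‖^2 := normsq_add_of_disjoint hdisj0
    have hP2 : (∑ i ∈ T0, |h i|)^2 ≤ (n:ℝ) * ‖v‖^2 := by
      have hcs := Finset.sum_mul_sq_le_sq_mul_sq T0 (fun _ => (1:ℝ)) (fun i => |h i|)
      simp only [one_mul, one_pow] at hcs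
      have hcard : (∑ _i ∈ T0, (1:ℝ)) = (T0.card : ℝ) := by
        rw [Finset.sum_const, nsmul_eq_mul, mul_one]
      rw [hcard] at hcs
      have habs : (∑ i ∈ T0, |h i|^2) = ∑ i ∈ T0, (h i)^2 :=
        Finset.sum_congr rfl fun i _ => sq_abs _
      rw [habs] at hcs
      have hcardn : (T0.card : ℝ) ≤ (n:ℝ) := by exact_mod_cast hT0
      have hsum_nn : (0:ℝ) ≤ ∑ i ∈ T0, (h i)^2 := Finset.sum_nonneg fun i _ => sq_nonneg _
      have hH0nn : (0:ℝ) ≤ ‖H 0‖^2 := sq_nonneg _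
      calc (∑ i ∈ T0, |h i|)^2 ≤ (T0.card : ℝ) * ∑ i ∈ T0, (h i)^2 := hcs
        _ ≤ (n:ℝ) * ∑ i ∈ T0, (h i)^2 := mul_le_mul_of_nonneg_right hcardn hsum_nn
        _ = (n:ℝ) * ‖a‖^2 := by rw [hasq]
        _ ≤ (n:ℝ) * ‖v‖^2 := by
            apply mul_le_mul_of_nonneg_left _ (by positivity)
            linarith [hv2, hH0nn]
    have hPnn : (0:ℝ) ≤ ∑ i ∈ T0, |h i| := Finset.sum_nonneg fun i _ => abs_nonneg _
    have hsqpos : (0:ℝ) < Real.sqrt n := Real.sqrt_pos.mpr (by exact_mod_cast hn)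
    have hsqsq : Real.sqrt n ^ 2 = (n:ℝ) := Real.sq_sqrt (by positivity)
    exact conclude_lemma hPnn hzpos hsqsq hsqpos hP2 hvle (norm_nonneg v) hWnn hWz
  -- conclude from key
  have h1 : ∑ i, |u i| = ∑ i ∈ T0, |u i| + ∑ i ∈ T0ᶜ, |u i| :=
    (Finset.sum_add_sum_compl T0 _).symm
  have h2 : ∑ i ∈ T0ᶜ, |u i| = ∑ i ∈ T0ᶜ, |h i| := by
    refine Finset.sum_congr rfl fun i hi => ?_
    rw [happ i, hxoff i (Finset.mem_compl.mp hi), sub_zero]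
  have h3 : ∀ i ∈ T0, |x i| - |h i| ≤ |u i| := by
    intro i _
    have e := abs_sub_abs_le_abs_sub (x i) (u i)
    have e2 : |x i - u i| = |h i| := by rw [happ i, abs_sub_comm]
    rw [e2] at e
    linarith
  have h4 : ∑ i, |x i| = ∑ i ∈ T0, |x i| := by
    refine (Finset.sum_subset (Finset.subset_univ T0) fun i _ hi => ?_).symm
    rw [hxoff i hi, abs_zero]
  have h5 : ∑ i ∈ T0, (|x i| - |h i|) ≤ ∑ i ∈ T0, |u i| := Finset.sum_le_sum h3
  rw [Finset.sum_sub_distrib] at h5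
  linarith
end
end

section
/- (Local approximation.) Assume the N×d real matrix Φ satisfies the Restricted Isometry Condition with parameters (2n, ε), where 0 < ε ≤ 0.03. Then for every n-sparse vector v ∈ ℝ^d and every index set I ⊆ {1,…,d} with |I| ≤ n, the observation vector u = Φ*Φv satisfies ‖u|_I − v|_I‖₂ ≤ 2.03 ε ‖v‖₂. -/
open Finset

noncomputable section

set_option maxHeartbeats 800000 in
open RealInnerProductSpace in
lemma key_inner {N d : ℕ} (Φ : Matrix (Fin N) (Fin d) ℝ) (m : ℕ) (ε : ℝ)
    (hε : 0 ≤ ε) (hΦ : RIC Φ m ε) (x y : EuclideanSpace ℝ (Fin d))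
    (h1 : msparse m (x + y)) (h2 : msparse m (x - y)) :
    |⟪Matrix.toEuclideanLin Φ x, Matrix.toEuclideanLin Φ y⟫ - ⟪x, y⟫|
      ≤ (2*ε + ε^2) * (‖x‖^2 + ‖y‖^2) / 2 := by
  set A := Matrix.toEuclideanLin Φ with hA
  have hsq : ∀ w : EuclideanSpace ℝ (Fin d), msparse m w →
      |‖A w‖^2 - ‖w‖^2| ≤ (2*ε + ε^2) * ‖w‖^2 := by
    intro w hw
    obtain ⟨ha, hb⟩ := hΦ w hw
    have h0 : (0:ℝ) ≤ ‖w‖ := norm_nonneg _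
    have h0' : (0:ℝ) ≤ ‖A w‖ := norm_nonneg _
    rw [abs_le]
    constructor <;> nlinarith
  have pol : ∀ a b : EuclideanSpace ℝ (Fin N), ⟪a, b⟫ = (‖a+b‖^2 - ‖a-b‖^2)/4 := by
    intro a b
    have h := re_inner_eq_norm_add_mul_self_sub_norm_sub_mul_self_div_four (𝕜 := ℝ) a b
    simp only [RCLike.re_to_real] at h
    rw [h]
    ring
  have pol' : ∀ a b : EuclideanSpace ℝ (Fin d), ⟪a, b⟫ = (‖a+b‖^2 - ‖a-b‖^2)/4 := by
    intro a b
    have h := re_inner_eq_norm_add_mul_self_sub_norm_sub_mul_self_div_four (𝕜 := ℝ) a b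
    simp only [RCLike.re_to_real] at h
    rw [h]
    ring
  have e1 : ⟪A x, A y⟫ = (‖A (x+y)‖^2 - ‖A (x-y)‖^2)/4 := by
    rw [pol, ← map_add, ← map_sub]
  have e2 : ⟪x, y⟫ = (‖x+y‖^2 - ‖x-y‖^2)/4 := pol' x y
  have par : ‖x+y‖^2 + ‖x-y‖^2 = 2*(‖x‖^2 + ‖y‖^2) := by
    have h := parallelogram_law_with_norm ℝ x y
    linear_combination h
  have b1 := hsq (x+y) h1
  have b2 := hsq (x-y) h2
  have hmul : (2*ε+ε^2) * (‖x+y‖^2 + ‖x-y‖^2) = (2*ε+ε^2) * (2*(‖x‖^2+‖y‖^2)) := by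
    rw [par]
  rw [e1, e2, abs_le]
  rw [abs_le] at b1 b2
  constructor <;> linarith [b1.1, b1.2, b2.1, b2.2, hmul]

open RealInnerProductSpace in
/-- Local approximation: under RIC with parameters `(2n, ε)`, `0 < ε ≤ 0.03`, for every
`n`-sparse `v` and every index set `I` with `|I| ≤ n`, the observation vector `u = Φ*Φv`
satisfies `‖u|_I − v|_I‖₂ ≤ 2.03 ε ‖v‖₂`. -/
theorem local_approximation {N d n : ℕ} (Φ : Matrix (Fin N) (Fin d) ℝ)
    (ε : ℝ) (hε : 0 < ε) (hε' : ε ≤ 0.03) (hΦ : RIC Φ (2 * n) ε)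
    (v : EuclideanSpace ℝ (Fin d)) (hv : msparse n v)
    (I : Finset (Fin d)) (hI : I.card ≤ n) :
    ‖restr I (Matrix.toEuclideanLin Φ.transpose (Matrix.toEuclideanLin Φ v)) - restr I v‖
      ≤ 2.03 * ε * ‖v‖ := by
  set A := Matrix.toEuclideanLin Φ with hA
  set u := Matrix.toEuclideanLin Φ.transpose (A v) with hu
  set w : EuclideanSpace ℝ (Fin d) := restr I (u - v) with hw
  have hwv : restr I u - restr I v = w := by
    ext i
    show restr I u i - restr I v i = _
    simp only [hw, restr, PiLp.toLp_apply]
    split_ifs with hi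
    · show _ = (u - v) i
      simp [PiLp.sub_apply]
    · simp
  rw [hwv]
  rcases eq_or_ne w 0 with h0 | h0
  · rw [h0, norm_zero]; positivity
  have hvne : v ≠ 0 := by
    rintro rfl
    apply h0
    ext i
    simp [hw, restr, hu, map_zero]
  have hwpos : 0 < ‖w‖ := norm_pos_iff.mpr h0
  have hvpos : 0 < ‖v‖ := norm_pos_iff.mpr hvne
  set c : ℝ := ‖v‖ / ‖w‖ with hc
  have hcpos : 0 < c := div_pos hvpos hwpos
  have hwsupp : ∀ i, w i ≠ 0 → i ∈ I := by
    intro i h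
    by_contra hi
    simp [hw, restr, hi] at h
  have hcard : (I ∪ suppF v).card ≤ 2 * n := by
    calc (I ∪ suppF v).card ≤ I.card + (suppF v).card := card_union_le _ _
    _ ≤ n + n := Nat.add_le_add hI hv
    _ = 2 * n := by ring
  have hsub : ∀ (z : EuclideanSpace ℝ (Fin d)), (∀ i, z i ≠ 0 → i ∈ I ∪ suppF v) →
      msparse (2*n) z := by
    intro z hz
    refine le_trans (card_le_card ?_) hcard
    intro i hi
    simp only [mem_filter, mem_univ, true_and] at hi
    exact hz i hi
  have hzero : ∀ i, i ∉ I ∪ suppF v → w i = 0 ∧ v i = 0 := by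
    intro i hi
    simp only [mem_union, suppF, mem_filter, mem_univ, true_and, not_or, not_not] at hi
    refine ⟨?_, hi.2⟩
    by_contra h
    exact hi.1 (hwsupp i h)
  have hsp1 : msparse (2*n) (c • w + v) := by
    apply hsub
    intro i hi
    by_contra hni
    obtain ⟨h1, h2⟩ := hzero i hni
    apply hi
    show c * w i + v i = 0
    rw [h1, h2]; ring
  have hsp2 : msparse (2*n) (c • w - v) := by
    apply hsub
    intro i hi
    by_contra hni
    obtain ⟨h1, h2⟩ := hzero i hni
    apply hi
    show c * w i - v i = 0
    rw [h1, h2]; ring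
  have hkey := key_inner Φ (2*n) ε hε.le hΦ (c • w) v hsp1 hsp2
  -- adjoint identity
  have hadj : ⟪A w, A v⟫ = ⟪w, u⟫ := by
    rw [hu, hA, ← Matrix.conjTranspose_eq_transpose_of_trivial,
      Matrix.toEuclideanLin_conjTranspose_eq_adjoint, LinearMap.adjoint_inner_right]
  -- ⟪w, u - v⟫ = ‖w‖²
  have hinner : ⟪w, u⟫ - ⟪w, v⟫ = ‖w‖^2 := by
    rw [← inner_sub_right, ← real_inner_self_eq_norm_sq]
    simp only [PiLp.inner_apply, RCLike.inner_apply, conj_trivial]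
    apply Finset.sum_congr rfl
    intro i _
    by_cases hi : i ∈ I
    · have : w i = (u - v) i := by simp [hw, restr, hi]
      rw [this]
    · have : w i = 0 := by simp [hw, restr, hi]
      rw [this]; ring
  -- rewrite key inequality
  have hx : ‖c • w‖ = ‖v‖ := by
    rw [norm_smul, Real.norm_eq_abs, abs_of_pos hcpos, hc]
    field_simp
  have hlin : ⟪A (c • w), A v⟫ - ⟪c • w, v⟫ = c * ‖w‖^2 := by
    rw [map_smul, inner_smul_left, inner_smul_left]
    simp only [conj_trivial]
    rw [← mul_sub, hadj, hinner]
  rw [hlin, hx] at hkey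
  have habs : c * ‖w‖^2 ≤ (2*ε + ε^2) * (‖v‖^2 + ‖v‖^2) / 2 :=
    le_trans (le_abs_self _) hkey
  have hcw : c * ‖w‖^2 = ‖v‖ * ‖w‖ := by
    rw [hc]; field_simp
  rw [hcw] at habs
  have : ‖w‖ ≤ (2*ε + ε^2) * ‖v‖ := by
    have h := mul_le_mul_of_nonneg_left habs (le_of_lt (inv_pos.mpr hvpos))
    calc ‖w‖ = ‖v‖⁻¹ * (‖v‖ * ‖w‖) := by field_simp
    _ ≤ ‖v‖⁻¹ * ((2*ε + ε^2) * (‖v‖^2 + ‖v‖^2) / 2) := h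
    _ = (2*ε + ε^2) * ‖v‖ := by field_simp; ring
  calc ‖w‖ ≤ (2*ε + ε^2) * ‖v‖ := this
  _ ≤ 2.03 * ε * ‖v‖ := by nlinarith
end
end

section
/- (Spectral norm.) Assume the N×d real matrix Φ satisfies the Restricted Isometry Condition with parameters (2n, ε), ε ∈ (0,1). Then for every vector z ∈ ℝ^N and every index set I ⊆ {1,…,d} with |I| ≤ 2n, one has ‖(Φ*z)|_I‖₂ ≤ (1+ε)‖z‖₂. -/
open Finset

noncomputable section

/-- Spectral norm: under RIC with parameters `(2n, ε)`, `ε ∈ (0,1)`, for every `z ∈ ℝ^N`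
and every index set `I` with `|I| ≤ 2n`, one has `‖(Φ*z)|_I‖₂ ≤ (1+ε)‖z‖₂`. -/
theorem spectral_norm_bound {N d n : ℕ} (Φ : Matrix (Fin N) (Fin d) ℝ)
    (ε : ℝ) (hε : ε ∈ Set.Ioo (0 : ℝ) 1) (hΦ : RIC Φ (2 * n) ε)
    (z : EuclideanSpace ℝ (Fin N)) (I : Finset (Fin d)) (hI : I.card ≤ 2 * n) :
    ‖restr I (Matrix.toEuclideanLin Φ.transpose z)‖ ≤ (1 + ε) * ‖z‖ := by
  set w : EuclideanSpace ℝ (Fin d) := Matrix.toEuclideanLin Φ.transpose z with hw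
  set v : EuclideanSpace ℝ (Fin d) := restr I w with hv
  have hsparse : msparse (2 * n) v := by
    refine le_trans (le_trans (Finset.card_le_card ?_) le_rfl) hI
    intro i hi
    simp only [Finset.mem_filter, Finset.mem_univ, true_and] at hi
    by_contra h
    exact hi (by simp [hv, restr, h])
  have hT : Φ.transpose = Φ.conjTranspose := by
    ext i j; simp [Matrix.conjTranspose_apply]
  have hinner : (inner ℝ v w : ℝ) = ‖v‖ ^ 2 := by
    rw [← real_inner_self_eq_norm_sq]
    simp only [PiLp.inner_apply, RCLike.inner_apply, starRingEnd_apply, star_trivial]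
    refine Finset.sum_congr rfl fun i _ => ?_
    by_cases h : i ∈ I
    · simp [hv, restr, h]
    · simp [hv, restr, h]
  have hadj : (inner ℝ v w : ℝ) = inner ℝ (Matrix.toEuclideanLin Φ v) z := by
    rw [hw, hT, Matrix.toEuclideanLin_conjTranspose_eq_adjoint,
      LinearMap.adjoint_inner_right]
  have hcs : ‖v‖ ^ 2 ≤ ‖Matrix.toEuclideanLin Φ v‖ * ‖z‖ := by
    rw [← hinner, hadj]
    exact real_inner_le_norm _ _
  have hric := (hΦ v hsparse).2
  rcases eq_or_ne ‖v‖ 0 with h0 | h0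
  · rw [h0]; exact mul_nonneg (by linarith [hε.1]) (norm_nonneg z)
  · have hvpos : 0 < ‖v‖ := lt_of_le_of_ne (norm_nonneg _) (Ne.symm h0)
    have : ‖v‖ ^ 2 ≤ (1 + ε) * ‖v‖ * ‖z‖ :=
      hcs.trans (mul_le_mul_of_nonneg_right hric (norm_nonneg _))
    nlinarith [norm_nonneg z]
end
end

section
/- (Almost orthogonality of columns.) Assume the N×d real matrix Φ satisfies the Restricted Isometry Condition with parameters (2n, ε), where 0 < ε ≤ 0.03. Let I, J ⊆ {1,…,d} be disjoint index sets with |I ∪ J| ≤ 2n, and let P_I and P_J denote the orthogonal projections in ℝ^N onto range(Φ_I) and range(Φ_J) respectively. Then ‖P_I P_J z‖₂ ≤ 2.2 ε ‖z‖₂ for every z ∈ ℝ^N; that is, the operator norm of P_I P_J is at most 2.2 ε. -/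
set_option maxHeartbeats 1000000


open Finset

noncomputable section

lemma mem_colSpan_exists {N d : ℕ} (Φ : Matrix (Fin N) (Fin d) ℝ) (S : Finset (Fin d))
    (x : EuclideanSpace ℝ (Fin N)) (hx : x ∈ colSpan Φ S) :
    ∃ u : EuclideanSpace ℝ (Fin d), suppF u ⊆ S ∧ Matrix.toEuclideanLin Φ u = x := by
  induction hx using Submodule.span_induction with
  | mem y hy =>
    obtain ⟨j, hj, rfl⟩ := hy
    refine ⟨EuclideanSpace.single j 1, ?_, ?_⟩
    · intro i hi
      simp only [suppF, mem_filter, Finset.mem_filter_univ, mem_univ, true_and, EuclideanSpace.single_apply] at hi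
      rcases eq_or_ne i j with h | h
      · simpa [h] using hj
      · simp [h] at hi
    · have h1 : (EuclideanSpace.single j (1:ℝ) : EuclideanSpace ℝ (Fin d))
          = (WithLp.equiv 2 (Fin d → ℝ)).symm (Pi.single j 1) := rfl
      rw [h1, Matrix.toEuclideanLin_apply]
      ext i
      simp [Matrix.mulVec_single]
  | zero => exact ⟨0, by simp [suppF], by simp⟩
  | add a b ha hb iha ihb =>
    obtain ⟨u, hu, hu2⟩ := iha
    obtain ⟨v, hv, hv2⟩ := ihb
    refine ⟨u + v, ?_, by simp [hu2, hv2]⟩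
    intro i hi
    simp only [suppF, mem_filter, Finset.mem_filter_univ, mem_univ, true_and] at hi hu hv
    have : u i ≠ 0 ∨ v i ≠ 0 := by
      by_contra h
      push_neg at h
      exact hi (by simp [PiLp.add_apply, h.1, h.2])
    rcases this with h | h
    · exact hu (by simp [h])
    · exact hv (by simp [h])
  | smul c a ha iha =>
    obtain ⟨u, hu, hu2⟩ := iha
    refine ⟨c • u, ?_, by simp [hu2]⟩
    intro i hi
    simp only [suppF, mem_filter, Finset.mem_filter_univ, mem_univ, true_and] at hi hu
    simp only [PiLp.smul_apply, smul_eq_mul] at hi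
    exact hu (by simp [right_ne_zero_of_mul hi])

lemma inner_zero_of_disjoint_supp {d : ℕ} (u v : EuclideanSpace ℝ (Fin d))
    (I J : Finset (Fin d)) (hu : suppF u ⊆ I) (hv : suppF v ⊆ J)
    (hdisj : Disjoint I J) : inner ℝ u v = (0:ℝ) := by
  rw [PiLp.inner_apply]
  refine Finset.sum_eq_zero fun i _ => ?_
  rcases eq_or_ne (u i) 0 with h | h
  · simp [h]
  · have hiI : i ∈ I := hu (by simp [suppF, h])
    have hvi : v i = 0 := by
      by_contra h'
      exact (Finset.disjoint_left.mp hdisj hiI) (hv (by simp [suppF, h']))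
    simp [hvi]

lemma msparse_of_supp {d n : ℕ} (u : EuclideanSpace ℝ (Fin d)) (S : Finset (Fin d))
    (hu : suppF u ⊆ S) (hS : S.card ≤ 2 * n) : msparse (2 * n) u :=
  le_trans (Finset.card_le_card hu) hS

lemma key_inner_bound {N d n : ℕ} (Φ : Matrix (Fin N) (Fin d) ℝ)
    (ε : ℝ) (hε : 0 < ε) (hε' : ε ≤ 0.03) (hΦ : RIC Φ (2 * n) ε)
    (I J : Finset (Fin d)) (hdisj : Disjoint I J) (hcard : (I ∪ J).card ≤ 2 * n)
    (u v : EuclideanSpace ℝ (Fin d)) (hu : suppF u ⊆ I) (hv : suppF v ⊆ J) :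
    |(inner ℝ (Matrix.toEuclideanLin Φ u) (Matrix.toEuclideanLin Φ v) : ℝ)|
      ≤ ε * (‖u‖^2 + ‖v‖^2) := by
  have hsub : ∀ w : EuclideanSpace ℝ (Fin d), suppF w ⊆ I ∪ J → msparse (2*n) w :=
    fun w hw => msparse_of_supp w _ hw hcard
  have hsuppadd : suppF (u + v) ⊆ I ∪ J := by
    intro i hi
    simp only [suppF, mem_filter, Finset.mem_filter_univ, mem_univ, true_and] at hi
    simp only [PiLp.add_apply] at hi
    by_contra h
    simp only [Finset.mem_union, not_or] at h
    have hui : u i = 0 := by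
      by_contra h'; exact h.1 (hu (by simp [suppF, h']))
    have hvi : v i = 0 := by
      by_contra h'; exact h.2 (hv (by simp [suppF, h']))
    exact hi (by simp [hui, hvi])
  have hsuppsub : suppF (u - v) ⊆ I ∪ J := by
    intro i hi
    simp only [suppF, mem_filter, Finset.mem_filter_univ, mem_univ, true_and] at hi
    simp only [PiLp.sub_apply] at hi
    by_contra h
    simp only [Finset.mem_union, not_or] at h
    have hui : u i = 0 := by
      by_contra h'; exact h.1 (hu (by simp [suppF, h']))
    have hvi : v i = 0 := by
      by_contra h'; exact h.2 (hv (by simp [suppF, h']))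
    exact hi (by simp [hui, hvi])
  have hinner : inner ℝ u v = (0:ℝ) := inner_zero_of_disjoint_supp u v I J hu hv hdisj
  have hadd : ‖u + v‖^2 = ‖u‖^2 + ‖v‖^2 := by
    rw [norm_add_sq_real, hinner]; ring
  have hsb : ‖u - v‖^2 = ‖u‖^2 + ‖v‖^2 := by
    rw [norm_sub_sq_real, hinner]; ring
  obtain ⟨hA1, hA2⟩ := hΦ (u + v) (hsub _ hsuppadd)
  obtain ⟨hB1, hB2⟩ := hΦ (u - v) (hsub _ hsuppsub)
  have hmap_add : Matrix.toEuclideanLin Φ (u + v)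
      = Matrix.toEuclideanLin Φ u + Matrix.toEuclideanLin Φ v := map_add _ _ _
  have hmap_sub : Matrix.toEuclideanLin Φ (u - v)
      = Matrix.toEuclideanLin Φ u - Matrix.toEuclideanLin Φ v := map_sub _ _ _
  set a := Matrix.toEuclideanLin Φ u
  set b := Matrix.toEuclideanLin Φ v
  have h4 : (4:ℝ) * inner ℝ a b = ‖a + b‖^2 - ‖a - b‖^2 := by
    rw [norm_add_sq_real, norm_sub_sq_real]; ring
  have hnn1 : (0:ℝ) ≤ ‖u + v‖ := norm_nonneg _
  have hnn2 : (0:ℝ) ≤ ‖u - v‖ := norm_nonneg _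
  have hnn3 : (0:ℝ) ≤ ‖a + b‖ := norm_nonneg _
  have hnn4 : (0:ℝ) ≤ ‖a - b‖ := norm_nonneg _
  have h1e : (0:ℝ) ≤ 1 - ε := by linarith
  have hub1 : ‖a + b‖^2 ≤ (1+ε)^2 * ‖u+v‖^2 := by
    rw [← hmap_add]
    nlinarith [norm_nonneg (Matrix.toEuclideanLin Φ (u+v))]
  have hlb1 : (1-ε)^2 * ‖u+v‖^2 ≤ ‖a + b‖^2 := by
    rw [← hmap_add]
    nlinarith [mul_nonneg h1e hnn1]
  have hub2 : ‖a - b‖^2 ≤ (1+ε)^2 * ‖u-v‖^2 := by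
    rw [← hmap_sub]
    nlinarith [norm_nonneg (Matrix.toEuclideanLin Φ (u-v))]
  have hlb2 : (1-ε)^2 * ‖u-v‖^2 ≤ ‖a - b‖^2 := by
    rw [← hmap_sub]
    nlinarith [mul_nonneg h1e hnn2]
  rw [abs_le]
  constructor <;> nlinarith [hadd, hsb]

lemma key_inner_bound' {N d n : ℕ} (Φ : Matrix (Fin N) (Fin d) ℝ)
    (ε : ℝ) (hε : 0 < ε) (hε' : ε ≤ 0.03) (hΦ : RIC Φ (2 * n) ε)
    (I J : Finset (Fin d)) (hdisj : Disjoint I J) (hcard : (I ∪ J).card ≤ 2 * n)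
    (u v : EuclideanSpace ℝ (Fin d)) (hu : suppF u ⊆ I) (hv : suppF v ⊆ J) :
    |(inner ℝ (Matrix.toEuclideanLin Φ u) (Matrix.toEuclideanLin Φ v) : ℝ)|
      ≤ 2 * ε * ‖u‖ * ‖v‖ := by
  rcases eq_or_ne u 0 with rfl | hu0
  · simp
  rcases eq_or_ne v 0 with rfl | hv0
  · simp
  have hnu : 0 < ‖u‖ := norm_pos_iff.mpr hu0
  have hnv : 0 < ‖v‖ := norm_pos_iff.mpr hv0
  have hsu : suppF (‖v‖ • u) ⊆ I := by
    intro i hi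
    simp only [suppF, mem_filter, Finset.mem_filter_univ, mem_univ, true_and] at hi
    simp only [PiLp.smul_apply, smul_eq_mul] at hi
    exact hu (by simp [suppF, right_ne_zero_of_mul hi])
  have hsv : suppF (‖u‖ • v) ⊆ J := by
    intro i hi
    simp only [suppF, mem_filter, Finset.mem_filter_univ, mem_univ, true_and] at hi
    simp only [PiLp.smul_apply, smul_eq_mul] at hi
    exact hv (by simp [suppF, right_ne_zero_of_mul hi])
  have := key_inner_bound Φ ε hε hε' hΦ I J hdisj hcard (‖v‖ • u) (‖u‖ • v) hsu hsv
  rw [map_smul, map_smul, real_inner_smul_left, real_inner_smul_right, norm_smul, norm_smul,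
    abs_mul, abs_mul, abs_of_nonneg hnv.le, abs_of_nonneg hnu.le] at this
  have hthis : ‖v‖ * (‖u‖ * |(inner ℝ (Matrix.toEuclideanLin Φ u) (Matrix.toEuclideanLin Φ v) : ℝ)|)
      ≤ ε * ((‖v‖*‖u‖)^2 + (‖u‖*‖v‖)^2) := by
    simpa [Real.norm_eq_abs, abs_of_nonneg hnu.le, abs_of_nonneg hnv.le] using this
  have hpos : 0 < ‖v‖ * ‖u‖ := mul_pos hnv hnu
  nlinarith [abs_nonneg (inner ℝ (Matrix.toEuclideanLin Φ u) (Matrix.toEuclideanLin Φ v) : ℝ)]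

lemma span_inner_bound {N d n : ℕ} (Φ : Matrix (Fin N) (Fin d) ℝ)
    (ε : ℝ) (hε : 0 < ε) (hε' : ε ≤ 0.03) (hΦ : RIC Φ (2 * n) ε)
    (I J : Finset (Fin d)) (hdisj : Disjoint I J) (hcard : (I ∪ J).card ≤ 2 * n)
    (x y : EuclideanSpace ℝ (Fin N)) (hx : x ∈ colSpan Φ I) (hy : y ∈ colSpan Φ J) :
    |(inner ℝ x y : ℝ)| ≤ 2.2 * ε * ‖x‖ * ‖y‖ := by
  obtain ⟨u, hu, rfl⟩ := mem_colSpan_exists Φ I x hx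
  obtain ⟨v, hv, rfl⟩ := mem_colSpan_exists Φ J y hy
  have hIc : I.card ≤ 2 * n := le_trans (Finset.card_le_card Finset.subset_union_left) hcard
  have hJc : J.card ≤ 2 * n := le_trans (Finset.card_le_card Finset.subset_union_right) hcard
  have hsu : msparse (2*n) u := msparse_of_supp u I hu hIc
  have hsv : msparse (2*n) v := msparse_of_supp v J hv hJc
  have h1 := (hΦ u hsu).1
  have h2 := (hΦ v hsv).1
  have hkey := key_inner_bound' Φ ε hε hε' hΦ I J hdisj hcard u v hu hv
  have hnu : (0:ℝ) ≤ ‖u‖ := norm_nonneg _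
  have hnv : (0:ℝ) ≤ ‖v‖ := norm_nonneg _
  have h1e : (0:ℝ) < 1 - ε := by linarith
  -- (1-ε)^2 ‖u‖‖v‖ ≤ ‖Φu‖‖Φv‖
  have hmm : (1-ε)^2 * (‖u‖ * ‖v‖) ≤ ‖Matrix.toEuclideanLin Φ u‖ * ‖Matrix.toEuclideanLin Φ v‖ := by
    have h3 := mul_le_mul h1 h2 (mul_nonneg h1e.le hnv) (norm_nonneg _)
    nlinarith [h3]
  have hfac : 2 * ε * ‖u‖ * ‖v‖ ≤ 2.2 * ε * ((1-ε)^2 * (‖u‖ * ‖v‖)) := by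
    have hc : (2:ℝ) ≤ 2.2 * (1-ε)^2 := by nlinarith
    nlinarith [mul_le_mul_of_nonneg_right hc (mul_nonneg (mul_nonneg hε.le hnu) hnv)]
  calc |(inner ℝ (Matrix.toEuclideanLin Φ u) (Matrix.toEuclideanLin Φ v) : ℝ)|
      ≤ 2 * ε * ‖u‖ * ‖v‖ := hkey
    _ ≤ 2.2 * ε * ((1-ε)^2 * (‖u‖ * ‖v‖)) := hfac
    _ ≤ 2.2 * ε * (‖Matrix.toEuclideanLin Φ u‖ * ‖Matrix.toEuclideanLin Φ v‖) := by
        have : (0:ℝ) ≤ 2.2 * ε := by positivity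
        exact mul_le_mul_of_nonneg_left hmm this
    _ = 2.2 * ε * ‖Matrix.toEuclideanLin Φ u‖ * ‖Matrix.toEuclideanLin Φ v‖ := by ring

/-- Almost orthogonality of columns: under RIC with parameters `(2n, ε)`, `0 < ε ≤ 0.03`,
for disjoint index sets `I, J` with `|I ∪ J| ≤ 2n`, the composition of the orthogonal
projections onto `range(Φ_I)` and `range(Φ_J)` has operator norm at most `2.2 ε`. -/
theorem almost_orthogonality_of_columns {N d n : ℕ} (Φ : Matrix (Fin N) (Fin d) ℝ)
    (ε : ℝ) (hε : 0 < ε) (hε' : ε ≤ 0.03) (hΦ : RIC Φ (2 * n) ε)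
    (I J : Finset (Fin d)) (hdisj : Disjoint I J) (hcard : (I ∪ J).card ≤ 2 * n)
    (z : EuclideanSpace ℝ (Fin N)) :
    ‖(Submodule.orthogonalProjection (colSpan Φ I)
        ((Submodule.orthogonalProjection (colSpan Φ J) z : EuclideanSpace ℝ (Fin N)))
        : EuclideanSpace ℝ (Fin N))‖ ≤ 2.2 * ε * ‖z‖ := by
  set w : EuclideanSpace ℝ (Fin N) := (Submodule.orthogonalProjection (colSpan Φ J) z : EuclideanSpace ℝ (Fin N)) with hw
  set q : EuclideanSpace ℝ (Fin N) := (Submodule.orthogonalProjection (colSpan Φ I) w : EuclideanSpace ℝ (Fin N)) with hq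
  have hqmem : q ∈ colSpan Φ I := (Submodule.orthogonalProjection (colSpan Φ I) w).2
  have hwmem : w ∈ colSpan Φ J := (Submodule.orthogonalProjection (colSpan Φ J) z).2
  have hwz : ‖w‖ ≤ ‖z‖ := by
    have h := ContinuousLinearMap.le_opNorm (Submodule.orthogonalProjection (colSpan Φ J)) z
    have h2 := Submodule.orthogonalProjection_norm_le (colSpan Φ J)
    calc ‖w‖ = ‖Submodule.orthogonalProjection (colSpan Φ J) z‖ := rfl
      _ ≤ ‖Submodule.orthogonalProjection (colSpan Φ J)‖ * ‖z‖ := h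
      _ ≤ 1 * ‖z‖ := by
          exact mul_le_mul_of_nonneg_right h2 (norm_nonneg z)
      _ = ‖z‖ := one_mul _
  have hperp : (inner ℝ (w - q) q : ℝ) = 0 :=
    Submodule.starProjection_inner_eq_zero w q hqmem
  have hsq : ‖q‖^2 = (inner ℝ q w : ℝ) := by
    have : (inner ℝ w q : ℝ) = (inner ℝ q q : ℝ) := by
      have := hperp
      rw [inner_sub_left] at this
      linarith
    have hcomm : (inner ℝ q w : ℝ) = inner ℝ w q := real_inner_comm w q
    rw [hcomm, this, real_inner_self_eq_norm_sq]
  have hbd := span_inner_bound Φ ε hε hε' hΦ I J hdisj hcard q w hqmem hwmem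
  rcases eq_or_ne ‖q‖ 0 with h0 | h0
  · rw [h0]; positivity
  have hqpos : 0 < ‖q‖ := lt_of_le_of_ne (norm_nonneg q) (Ne.symm h0)
  have : ‖q‖^2 ≤ 2.2 * ε * ‖q‖ * ‖w‖ := le_trans (by rw [hsq]; exact le_abs_self _) hbd
  have h2 : ‖q‖ ≤ 2.2 * ε * ‖w‖ := by nlinarith
  calc ‖q‖ ≤ 2.2 * ε * ‖w‖ := h2
    _ ≤ 2.2 * ε * ‖z‖ := by
        have : (0:ℝ) ≤ 2.2 * ε := by positivity
        exact mul_le_mul_of_nonneg_left hwz this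
end
end

section
/- Assume the N×d real matrix Φ satisfies the Restricted Isometry Condition with parameters (2n, ε), where 0 < ε ≤ 0.03. Then for every index set Γ ⊆ {1,…,d} with |Γ| ≤ 2n and every vector y ∈ ℝ^d supported in Γ, one has ‖(Φ*Φy)|_Γ − y‖₂ ≤ 2.03 ε ‖y‖₂; equivalently, the restricted Gram operator Φ_Γ*Φ_Γ differs from the identity on ℝ^Γ by at most 2.03 ε in operator norm. -/
open Finset

set_option maxHeartbeats 1000000

noncomputable section

/-- A vector supported in `Γ` with `Γ.card ≤ m` is `m`-sparse. -/
lemma msparse_of_supp_s5 {d m : ℕ} {Γ : Finset (Fin d)} (hΓ : Γ.card ≤ m)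
    {v : EuclideanSpace ℝ (Fin d)} (hv : ∀ i ∉ Γ, v i = 0) : msparse m v := by
  refine le_trans (Finset.card_le_card ?_) hΓ
  intro i hi
  simp only [Finset.mem_filter] at hi
  by_contra h
  exact hi.2 (hv i h)

/-- Quadratic form bound from RIC. -/
lemma quad_bound {N d n : ℕ} {Φ : Matrix (Fin N) (Fin d) ℝ} {ε : ℝ}
    (hε : 0 < ε) (hε' : ε ≤ 0.03) (hΦ : RIC Φ (2 * n) ε)
    (v : EuclideanSpace ℝ (Fin d)) (hv : msparse (2 * n) v) :
    |‖Matrix.toEuclideanLin Φ v‖ ^ 2 - ‖v‖ ^ 2| ≤ 2.03 * ε * ‖v‖ ^ 2 := by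
  obtain ⟨h1, h2⟩ := hΦ v hv
  have hnv : (0:ℝ) ≤ ‖v‖ := norm_nonneg _
  have hΦv : (0:ℝ) ≤ ‖Matrix.toEuclideanLin Φ v‖ := norm_nonneg _
  have hub : ‖Matrix.toEuclideanLin Φ v‖ ^ 2 ≤ ((1 + ε) * ‖v‖) ^ 2 := by
    apply pow_le_pow_left₀ hΦv h2
  have hlb : ((1 - ε) * ‖v‖) ^ 2 ≤ ‖Matrix.toEuclideanLin Φ v‖ ^ 2 := by
    apply pow_le_pow_left₀ (mul_nonneg (by linarith) hnv) h1
  rw [abs_le]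
  constructor <;> nlinarith [sq_nonneg ‖v‖, sq_nonneg ε]

/-- Under RIC with parameters `(2n, ε)`, `0 < ε ≤ 0.03`, for every index set `Γ` with
`|Γ| ≤ 2n` and every vector `y` supported in `Γ`, one has
`‖(Φ*Φy)|_Γ − y‖₂ ≤ 2.03 ε ‖y‖₂`. -/
theorem restricted_gram_close_to_identity {N d n : ℕ} (Φ : Matrix (Fin N) (Fin d) ℝ)
    (ε : ℝ) (hε : 0 < ε) (hε' : ε ≤ 0.03) (hΦ : RIC Φ (2 * n) ε)
    (Γ : Finset (Fin d)) (hΓ : Γ.card ≤ 2 * n)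
    (y : EuclideanSpace ℝ (Fin d)) (hy : ∀ i ∉ Γ, y i = 0) :
    ‖restr Γ (Matrix.toEuclideanLin Φ.transpose (Matrix.toEuclideanLin Φ y)) - y‖
      ≤ 2.03 * ε * ‖y‖ := by
  set T := Matrix.toEuclideanLin Φ with hT
  -- Bilinear form bound for vectors supported in Γ
  have B_half : ∀ u v : EuclideanSpace ℝ (Fin d), (∀ i ∉ Γ, u i = 0) → (∀ i ∉ Γ, v i = 0) →
      |(inner ℝ (T u) (T v) : ℝ) - inner ℝ u v| ≤ 2.03 * ε * ((‖u‖ ^ 2 + ‖v‖ ^ 2) / 2) := by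
    intro u v hu hv
    have hsum : ∀ i ∉ Γ, (u + v) i = 0 := fun i hi => by
      simp [PiLp.add_apply, hu i hi, hv i hi]
    have hdif : ∀ i ∉ Γ, (u - v) i = 0 := fun i hi => by
      simp [PiLp.sub_apply, hu i hi, hv i hi]
    have q1 := quad_bound hε hε' hΦ (u + v) (msparse_of_supp_s5 hΓ hsum)
    have q2 := quad_bound hε hε' hΦ (u - v) (msparse_of_supp_s5 hΓ hdif)
    have par : ‖u + v‖ ^ 2 + ‖u - v‖ ^ 2 = 2 * ‖u‖ ^ 2 + 2 * ‖v‖ ^ 2 := by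
      have := parallelogram_law_with_norm ℝ u v
      nlinarith [this]
    have pol1 : (inner ℝ u v : ℝ) = (‖u + v‖ ^ 2 - ‖u - v‖ ^ 2) / 4 := by
      rw [@norm_add_sq_real, @norm_sub_sq_real]; ring
    have pol2 : (inner ℝ (T u) (T v) : ℝ) = (‖T (u + v)‖ ^ 2 - ‖T (u - v)‖ ^ 2) / 4 := by
      rw [map_add, map_sub, @norm_add_sq_real, @norm_sub_sq_real]; ring
    rw [pol1, pol2]
    have h1 := abs_le.mp q1
    have h2 := abs_le.mp q2
    rw [abs_le]
    constructor <;> nlinarith [h1.1, h1.2, h2.1, h2.2]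
  -- product-form bilinear bound via scaling
  have B_prod : ∀ u v : EuclideanSpace ℝ (Fin d), (∀ i ∉ Γ, u i = 0) → (∀ i ∉ Γ, v i = 0) →
      |(inner ℝ (T u) (T v) : ℝ) - inner ℝ u v| ≤ 2.03 * ε * (‖u‖ * ‖v‖) := by
    intro u v hu hv
    by_cases huz : u = 0
    · simp [huz]
    by_cases hvz : v = 0
    · simp [hvz]
    have hun : (0:ℝ) < ‖u‖ := norm_pos_iff.mpr huz
    have hvn : (0:ℝ) < ‖v‖ := norm_pos_iff.mpr hvz
    set t : ℝ := Real.sqrt (‖v‖ / ‖u‖) with ht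
    have htpos : 0 < t := Real.sqrt_pos.mpr (by positivity)
    have ht2 : t ^ 2 = ‖v‖ / ‖u‖ := Real.sq_sqrt (by positivity)
    have hu' : ∀ i ∉ Γ, (t • u) i = 0 := fun i hi => by
      simp [PiLp.smul_apply, hu i hi]
    have hv' : ∀ i ∉ Γ, (t⁻¹ • v) i = 0 := fun i hi => by
      simp [PiLp.smul_apply, hv i hi]
    have key := B_half (t • u) (t⁻¹ • v) hu' hv'
    have e1 : (inner ℝ (T (t • u)) (T (t⁻¹ • v)) : ℝ) = inner ℝ (T u) (T v) := by
      rw [map_smul, map_smul, real_inner_smul_left, real_inner_smul_right,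
        ← mul_assoc, mul_inv_cancel₀ (ne_of_gt htpos), one_mul]
    have e2 : (inner ℝ (t • u) (t⁻¹ • v) : ℝ) = inner ℝ u v := by
      rw [real_inner_smul_left, real_inner_smul_right,
        ← mul_assoc, mul_inv_cancel₀ (ne_of_gt htpos), one_mul]
    have e3 : ‖t • u‖ ^ 2 = ‖v‖ * ‖u‖ := by
      rw [norm_smul, mul_pow, Real.norm_eq_abs, sq_abs, ht2]
      field_simp
    have e4 : ‖t⁻¹ • v‖ ^ 2 = ‖u‖ * ‖v‖ := by
      rw [norm_smul, mul_pow, Real.norm_eq_abs, sq_abs, inv_pow, ht2]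
      field_simp
    rw [e1, e2, e3, e4] at key
    calc |(inner ℝ (T u) (T v) : ℝ) - inner ℝ u v|
        ≤ 2.03 * ε * ((‖v‖ * ‖u‖ + ‖u‖ * ‖v‖) / 2) := key
      _ = 2.03 * ε * (‖u‖ * ‖v‖) := by ring
  -- the error vector
  set z : EuclideanSpace ℝ (Fin d) := restr Γ (Matrix.toEuclideanLin Φ.transpose (T y)) - y with hz
  have hzsupp : ∀ i ∉ Γ, z i = 0 := fun i hi => by
    simp [hz, restr, PiLp.sub_apply, hi, hy i hi]
  -- key identity: ‖z‖² = ⟨Tz, Ty⟩ - ⟨z, y⟩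
  have hadj : Matrix.toEuclideanLin Φ.transpose (T y) = (LinearMap.adjoint T) (T y) := by
    rw [hT, ← Matrix.toEuclideanLin_conjTranspose_eq_adjoint]
    congr 1
  have hinner_restr : (inner ℝ z (restr Γ (Matrix.toEuclideanLin Φ.transpose (T y))) : ℝ)
      = inner ℝ z (Matrix.toEuclideanLin Φ.transpose (T y)) := by
    rw [PiLp.inner_apply, PiLp.inner_apply]
    apply Finset.sum_congr rfl
    intro i _
    by_cases hi : i ∈ Γ
    · simp [restr, hi]
    · simp [hzsupp i hi]
  have hkey : ‖z‖ ^ 2 = (inner ℝ (T z) (T y) : ℝ) - inner ℝ z y := by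
    have : ‖z‖ ^ 2 = (inner ℝ z z : ℝ) := (real_inner_self_eq_norm_sq z).symm
    rw [this]
    nth_rewrite 2 [hz]
    rw [inner_sub_right, hinner_restr, hadj]
    rw [LinearMap.adjoint_inner_right]
  have hb := B_prod z y hzsupp hy
  rw [← hkey] at hb
  rw [abs_of_nonneg (by positivity)] at hb
  -- conclude
  by_cases hzz : ‖z‖ = 0
  · rw [hzz]; positivity
  · have hzpos : 0 < ‖z‖ := lt_of_le_of_ne (norm_nonneg _) (Ne.symm hzz)
    nlinarith [hb]
end
end

section
/- Assume the N×d real matrix Φ satisfies the Restricted Isometry Condition with parameters (2n, ε), where 0 < ε ≤ 0.03. Let a, b ∈ ℝ^d have disjoint supports with |supp(a) ∪ supp(b)| ≤ 2n. Then the images of a and b under Φ are almost orthogonal: |⟨Φa, Φb⟩| ≤ 2.03 ε ‖a‖₂ ‖b‖₂. -/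
open Finset RealInnerProductSpace

noncomputable section

lemma suppF_smul {d : ℕ} (c : ℝ) (hc : c ≠ 0) (v : EuclideanSpace ℝ (Fin d)) :
    suppF (c • v) = suppF v := by
  ext i
  simp [suppF, PiLp.smul_apply, smul_eq_mul, hc]

lemma suppF_add_subset {d : ℕ} (a b : EuclideanSpace ℝ (Fin d)) :
    suppF (a + b) ⊆ suppF a ∪ suppF b := by
  intro i hi
  simp only [suppF, mem_filter, mem_union, mem_univ, true_and] at *
  by_contra h
  push_neg at h
  exact hi (by simp [PiLp.add_apply, h.1, h.2])

lemma suppF_sub_subset {d : ℕ} (a b : EuclideanSpace ℝ (Fin d)) :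
    suppF (a - b) ⊆ suppF a ∪ suppF b := by
  intro i hi
  simp only [suppF, mem_filter, mem_union, mem_univ, true_and] at *
  by_contra h
  push_neg at h
  exact hi (by simp [PiLp.sub_apply, h.1, h.2])

lemma inner_zero_of_disjoint {d : ℕ} (a b : EuclideanSpace ℝ (Fin d))
    (hdisj : Disjoint (suppF a) (suppF b)) : ⟪a, b⟫ = 0 := by
  rw [PiLp.inner_apply]
  apply Finset.sum_eq_zero
  intro i _
  rcases eq_or_ne (a i) 0 with h | h
  · simp [h]
  · have hb : b i = 0 := by
      by_contra hb
      have hia : i ∈ suppF a := by simpa [suppF] using h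
      have hib : i ∈ suppF b := by simpa [suppF] using hb
      exact Finset.disjoint_left.mp hdisj hia hib
    simp [hb]

lemma key {N d n : ℕ} (Φ : Matrix (Fin N) (Fin d) ℝ)
    (ε : ℝ) (hε : 0 < ε) (hε' : ε ≤ 0.03) (hΦ : RIC Φ (2 * n) ε)
    (a b : EuclideanSpace ℝ (Fin d)) (hdisj : Disjoint (suppF a) (suppF b))
    (hcard : (suppF a ∪ suppF b).card ≤ 2 * n) :
    |(⟪Matrix.toEuclideanLin Φ a, Matrix.toEuclideanLin Φ b⟫)|
      ≤ ε * (‖a‖ ^ 2 + ‖b‖ ^ 2) := by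
  set T := Matrix.toEuclideanLin Φ with hT
  have hsp1 : msparse (2 * n) (a + b) :=
    le_trans (Finset.card_le_card (suppF_add_subset a b)) hcard
  have hsp2 : msparse (2 * n) (a - b) :=
    le_trans (Finset.card_le_card (suppF_sub_subset a b)) hcard
  have hab : ⟪a, b⟫ = 0 := inner_zero_of_disjoint a b hdisj
  have hs1 : ‖a + b‖ ^ 2 = ‖a‖ ^ 2 + ‖b‖ ^ 2 := by
    rw [norm_add_sq_real, hab]; ring
  have hs2 : ‖a - b‖ ^ 2 = ‖a‖ ^ 2 + ‖b‖ ^ 2 := by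
    rw [norm_sub_sq_real, hab]; ring
  have h1 := hΦ (a + b) hsp1
  have h2 := hΦ (a - b) hsp2
  have hεlt : (1 : ℝ) - ε ≥ 0 := by linarith
  -- squared bounds
  have sq1u : ‖T (a + b)‖ ^ 2 ≤ (1 + ε) ^ 2 * ‖a + b‖ ^ 2 := by
    have := pow_le_pow_left₀ (norm_nonneg (T (a + b))) h1.2 2
    rwa [mul_pow] at this
  have sq1l : (1 - ε) ^ 2 * ‖a + b‖ ^ 2 ≤ ‖T (a + b)‖ ^ 2 := by
    have := pow_le_pow_left₀ (mul_nonneg hεlt (norm_nonneg (a + b))) h1.1 2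
    rwa [mul_pow] at this
  have sq2u : ‖T (a - b)‖ ^ 2 ≤ (1 + ε) ^ 2 * ‖a - b‖ ^ 2 := by
    have := pow_le_pow_left₀ (norm_nonneg (T (a - b))) h2.2 2
    rwa [mul_pow] at this
  have sq2l : (1 - ε) ^ 2 * ‖a - b‖ ^ 2 ≤ ‖T (a - b)‖ ^ 2 := by
    have := pow_le_pow_left₀ (mul_nonneg hεlt (norm_nonneg (a - b))) h2.1 2
    rwa [mul_pow] at this
  have hTadd : T (a + b) = T a + T b := map_add T a b
  have hTsub : T (a - b) = T a - T b := map_sub T a b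
  have hpol : ⟪T a, T b⟫ = (‖T a + T b‖ ^ 2 - ‖T a - T b‖ ^ 2) / 4 := by
    have e1 := norm_add_sq_real (T a) (T b)
    have e2 := norm_sub_sq_real (T a) (T b)
    linarith
  rw [abs_le]
  rw [hTadd] at sq1u sq1l
  rw [hTsub] at sq2u sq2l
  rw [hs1] at sq1u sq1l
  rw [hs2] at sq2u sq2l
  have hr1 : (1 + ε) ^ 2 * (‖a‖ ^ 2 + ‖b‖ ^ 2) - (1 - ε) ^ 2 * (‖a‖ ^ 2 + ‖b‖ ^ 2)
      = 4 * (ε * (‖a‖ ^ 2 + ‖b‖ ^ 2)) := by ring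
  constructor
  · rw [hpol]; linarith
  · rw [hpol]; linarith

/-- Almost orthogonality of images: under RIC with parameters `(2n, ε)`, `0 < ε ≤ 0.03`,
if `a, b ∈ ℝ^d` have disjoint supports with `|supp(a) ∪ supp(b)| ≤ 2n`, then
`|⟨Φa, Φb⟩| ≤ 2.03 ε ‖a‖₂ ‖b‖₂`. -/
theorem almost_orthogonal_images {N d n : ℕ} (Φ : Matrix (Fin N) (Fin d) ℝ)
    (ε : ℝ) (hε : 0 < ε) (hε' : ε ≤ 0.03) (hΦ : RIC Φ (2 * n) ε)
    (a b : EuclideanSpace ℝ (Fin d)) (hdisj : Disjoint (suppF a) (suppF b))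
    (hcard : (suppF a ∪ suppF b).card ≤ 2 * n) :
    |(⟪Matrix.toEuclideanLin Φ a, Matrix.toEuclideanLin Φ b⟫)|
      ≤ 2.03 * ε * ‖a‖ * ‖b‖ := by
  set T := Matrix.toEuclideanLin Φ with hT
  rcases eq_or_ne a 0 with rfl | ha
  · simp [hε.le, mul_nonneg, norm_nonneg, mul_nonneg (mul_nonneg (by norm_num : (0:ℝ) ≤ 2.03) hε.le) (norm_nonneg b)]
  rcases eq_or_ne b 0 with rfl | hb
  · simp [mul_nonneg (mul_nonneg (mul_nonneg (by norm_num : (0:ℝ) ≤ 2.03) hε.le) (norm_nonneg a)) le_rfl]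
  have hna : (0 : ℝ) < ‖a‖ := norm_pos_iff.mpr ha
  have hnb : (0 : ℝ) < ‖b‖ := norm_pos_iff.mpr hb
  set a' : EuclideanSpace ℝ (Fin d) := ‖a‖⁻¹ • a with ha'
  set b' : EuclideanSpace ℝ (Fin d) := ‖b‖⁻¹ • b with hb'
  have hsa : suppF a' = suppF a := suppF_smul _ (inv_ne_zero hna.ne') a
  have hsb : suppF b' = suppF b := suppF_smul _ (inv_ne_zero hnb.ne') b
  have hna' : ‖a'‖ = 1 := by
    rw [ha', norm_smul]; simp [abs_of_pos (inv_pos.mpr hna), inv_mul_cancel₀ hna.ne']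
  have hnb' : ‖b'‖ = 1 := by
    rw [hb', norm_smul]; simp [abs_of_pos (inv_pos.mpr hnb), inv_mul_cancel₀ hnb.ne']
  have hkey := key Φ ε hε hε' hΦ a' b' (by rw [hsa, hsb]; exact hdisj)
    (by rw [hsa, hsb]; exact hcard)
  rw [hna', hnb'] at hkey
  have hscale : ⟪T a, T b⟫ = ‖a‖ * ‖b‖ * ⟪T a', T b'⟫ := by
    have : T a = ‖a‖ • T a' := by
      rw [ha', map_smul, smul_smul, mul_inv_cancel₀ hna.ne', one_smul]
    have hb'' : T b = ‖b‖ • T b' := by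
      rw [hb', map_smul, smul_smul, mul_inv_cancel₀ hnb.ne', one_smul]
    rw [this, hb'', real_inner_smul_left, real_inner_smul_right]
    ring
  rw [hscale, abs_mul, abs_of_pos (mul_pos hna hnb)]
  calc ‖a‖ * ‖b‖ * |⟪T a', T b'⟫| ≤ ‖a‖ * ‖b‖ * (ε * (1 ^ 2 + 1 ^ 2)) := by
        exact mul_le_mul_of_nonneg_left hkey (mul_pos hna hnb).le
    _ ≤ 2.03 * ε * ‖a‖ * ‖b‖ := by nlinarith [mul_pos (mul_pos hε hna) hnb]
end
end

section
/- (Approximation of the observation.) Assume the N×d real matrix Φ satisfies the Restricted Isometry Condition with parameters (2n, ε), where 0 < ε ≤ 0.03. Let v ∈ ℝ^d be n-sparse and let I ⊆ {1,…,d} satisfy |supp(v) ∪ I| ≤ 2n. Set x = Φv, F = range(Φ_I), r = P_{F^⊥} x, v₀ = v|_{supp(v)∖I}, x₀ = Φv₀, u₀ = Φ*x₀, and u = Φ*r. Then for every set T ⊆ {1,…,d} with |T| ≤ 2n, one has ‖(u₀ − u)|_T‖₂ ≤ 2.4 ε ‖v₀‖₂. -/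
open Finset
open scoped RealInnerProductSpace

noncomputable section

namespace NVaux

variable {N d : ℕ}

lemma inner_eq (x y : EuclideanSpace ℝ (Fin d)) : ⟪x, y⟫ = ∑ i, x i * y i := by
  simp [PiLp.inner_apply, RCLike.inner_apply, mul_comm]

lemma toEL_apply (Φ : Matrix (Fin N) (Fin d) ℝ) (v : EuclideanSpace ℝ (Fin d)) (i : Fin N) :
    Matrix.toEuclideanLin Φ v i = ∑ j, Φ i j * v j := rfl

lemma adj (Φ : Matrix (Fin N) (Fin d) ℝ) (w : EuclideanSpace ℝ (Fin N))
    (z : EuclideanSpace ℝ (Fin d)) :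
    ⟪Matrix.toEuclideanLin Φ.transpose w, z⟫ = ⟪w, Matrix.toEuclideanLin Φ z⟫ := by
  simp only [inner_eq]
  have h1 : ∀ (i : Fin d), Matrix.toEuclideanLin Φ.transpose w i = ∑ j, Φ j i * w j :=
    fun _ => rfl
  have h2 : ∀ (j : Fin N), Matrix.toEuclideanLin Φ z j = ∑ i, Φ j i * z i := fun _ => rfl
  simp only [h1, h2, Finset.sum_mul, Finset.mul_sum]
  rw [Finset.sum_comm]
  apply Finset.sum_congr rfl; intros; apply Finset.sum_congr rfl; intros; ring

lemma msparse_of_zero_off {m : ℕ} {S : Finset (Fin d)} {y : EuclideanSpace ℝ (Fin d)}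
    (h : ∀ i ∉ S, y i = 0) (hc : S.card ≤ m) : msparse m y := by
  refine le_trans (Finset.card_le_card ?_) hc
  intro i hi
  simp only [Finset.mem_filter, Finset.mem_univ, true_and] at hi
  by_contra hiS; exact hi (h i hiS)

lemma restr_zero_off {S : Finset (Fin d)} (w : EuclideanSpace ℝ (Fin d)) :
    ∀ i ∉ S, restr S w i = 0 := by
  intro i hi; simp [restr, hi]

lemma inner_restr_self (T : Finset (Fin d)) (c : EuclideanSpace ℝ (Fin d)) :
    ⟪restr T c, restr T c⟫ = ⟪restr T c, c⟫ := by
  rw [inner_eq, inner_eq]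
  apply Finset.sum_congr rfl; intro i _
  by_cases h : i ∈ T <;> simp [restr, h]

/-- Lemma B : `‖(Φ* w)|_T‖ ≤ (1+ε) ‖w‖` for `|T| ≤ 2n`. -/
lemma restr_transpose_bound {n : ℕ} {Φ : Matrix (Fin N) (Fin d) ℝ} {ε : ℝ}
    (hΦ : RIC Φ (2 * n) ε) (hε : 0 < ε) (w : EuclideanSpace ℝ (Fin N))
    (T : Finset (Fin d)) (hT : T.card ≤ 2 * n) :
    ‖restr T (Matrix.toEuclideanLin Φ.transpose w)‖ ≤ (1 + ε) * ‖w‖ := by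
  set c := Matrix.toEuclideanLin Φ.transpose w with hc
  set z := restr T c with hzdef
  have hzs : msparse (2 * n) z := msparse_of_zero_off (restr_zero_off c) hT
  have h1 : ‖z‖ ^ 2 = ⟪w, Matrix.toEuclideanLin Φ z⟫ := by
    rw [← real_inner_self_eq_norm_sq, hzdef, inner_restr_self, ← hzdef, hc,
      real_inner_comm, adj]
  have h2 : ⟪w, Matrix.toEuclideanLin Φ z⟫ ≤ ‖w‖ * ‖Matrix.toEuclideanLin Φ z‖ :=
    real_inner_le_norm _ _
  have h3 := (hΦ z hzs).2
  have hz0 : (0:ℝ) ≤ ‖z‖ := norm_nonneg _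
  by_cases hz : ‖z‖ = 0
  · rw [hz]; positivity
  · have hzpos : 0 < ‖z‖ := lt_of_le_of_ne hz0 (Ne.symm hz)
    nlinarith [norm_nonneg w, mul_le_mul_of_nonneg_left h3 (norm_nonneg w)]

/-- Near-orthogonality, unnormalized version. -/
lemma near_orth {n : ℕ} {Φ : Matrix (Fin N) (Fin d) ℝ} {ε : ℝ}
    (hΦ : RIC Φ (2 * n) ε) (hε1 : ε ≤ 1)
    {a b : EuclideanSpace ℝ (Fin d)} (hab : ⟪a, b⟫ = 0)
    (hsum : msparse (2 * n) (a + b)) (hdiff : msparse (2 * n) (a - b)) :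
    ⟪Matrix.toEuclideanLin Φ a, Matrix.toEuclideanLin Φ b⟫ ≤ ε * (‖a‖ ^ 2 + ‖b‖ ^ 2) := by
  have ha := hΦ _ hsum
  have hb := hΦ _ hdiff
  have e1 : ‖a + b‖ ^ 2 = ‖a‖ ^ 2 + ‖b‖ ^ 2 := by rw [norm_add_sq_real, hab]; ring
  have e2 : ‖a - b‖ ^ 2 = ‖a‖ ^ 2 + ‖b‖ ^ 2 := by rw [norm_sub_sq_real, hab]; ring
  have f1 : ‖Matrix.toEuclideanLin Φ (a + b)‖ ^ 2 =
      ‖Matrix.toEuclideanLin Φ a‖ ^ 2 +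
        2 * ⟪Matrix.toEuclideanLin Φ a, Matrix.toEuclideanLin Φ b⟫ +
        ‖Matrix.toEuclideanLin Φ b‖ ^ 2 := by
    rw [map_add, norm_add_sq_real]
  have f2 : ‖Matrix.toEuclideanLin Φ (a - b)‖ ^ 2 =
      ‖Matrix.toEuclideanLin Φ a‖ ^ 2 -
        2 * ⟪Matrix.toEuclideanLin Φ a, Matrix.toEuclideanLin Φ b⟫ +
        ‖Matrix.toEuclideanLin Φ b‖ ^ 2 := by
    rw [map_sub, norm_sub_sq_real]
  have g1 : ‖Matrix.toEuclideanLin Φ (a + b)‖ ^ 2 ≤ (1 + ε) ^ 2 * ‖a + b‖ ^ 2 := by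
    nlinarith [ha.2, norm_nonneg (Matrix.toEuclideanLin Φ (a + b)), norm_nonneg (a + b)]
  have g2 : (1 - ε) ^ 2 * ‖a - b‖ ^ 2 ≤ ‖Matrix.toEuclideanLin Φ (a - b)‖ ^ 2 := by
    nlinarith [hb.1, norm_nonneg (Matrix.toEuclideanLin Φ (a - b)), norm_nonneg (a - b),
      mul_nonneg (sub_nonneg.2 hε1) (norm_nonneg (a - b))]
  nlinarith [e1, e2, f1, f2, g1, g2]

lemma inner_zero_of_disj {a b : EuclideanSpace ℝ (Fin d)}
    (hdisj : ∀ i, a i = 0 ∨ b i = 0) : ⟪a, b⟫ = 0 := by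
  rw [inner_eq]
  apply Finset.sum_eq_zero
  intro i _
  rcases hdisj i with h | h <;> simp [h]

/-- Near-orthogonality, normalized version. -/
lemma near_orth' {n : ℕ} {Φ : Matrix (Fin N) (Fin d) ℝ} {ε : ℝ}
    (hΦ : RIC Φ (2 * n) ε) (hε : 0 < ε) (hε1 : ε ≤ 1)
    {a b : EuclideanSpace ℝ (Fin d)} (hdisj : ∀ i, a i = 0 ∨ b i = 0)
    (hcard : (suppF a ∪ suppF b).card ≤ 2 * n) :
    ⟪Matrix.toEuclideanLin Φ a, Matrix.toEuclideanLin Φ b⟫ ≤ 2 * ε * ‖a‖ * ‖b‖ := by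
  by_cases ha0 : a = 0
  · simp [ha0]
  by_cases hb0 : b = 0
  · simp [hb0]
  have hna : 0 < ‖a‖ := norm_pos_iff.2 ha0
  have hnb : 0 < ‖b‖ := norm_pos_iff.2 hb0
  set t : ℝ := Real.sqrt (‖b‖ / ‖a‖) with ht
  have htpos : 0 < t := Real.sqrt_pos.2 (by positivity)
  have ht2 : t ^ 2 = ‖b‖ / ‖a‖ := Real.sq_sqrt (by positivity)
  set a' : EuclideanSpace ℝ (Fin d) := t • a with ha'
  set b' : EuclideanSpace ℝ (Fin d) := t⁻¹ • b with hb'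
  have hza' : ∀ i ∉ suppF a ∪ suppF b, a' i = 0 := by
    intro i hi
    simp only [Finset.mem_union, suppF, Finset.mem_filter, Finset.mem_univ, true_and,
      not_or, not_not] at hi
    simp [ha', hi.1]
  have hzb' : ∀ i ∉ suppF a ∪ suppF b, b' i = 0 := by
    intro i hi
    simp only [Finset.mem_union, suppF, Finset.mem_filter, Finset.mem_univ, true_and,
      not_or, not_not] at hi
    simp [hb', hi.2]
  have hsum : msparse (2 * n) (a' + b') := by
    refine msparse_of_zero_off (fun i hi => ?_) hcard
    have : (a' + b') i = a' i + b' i := rfl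
    rw [this, hza' i hi, hzb' i hi, add_zero]
  have hdiff : msparse (2 * n) (a' - b') := by
    refine msparse_of_zero_off (fun i hi => ?_) hcard
    have : (a' - b') i = a' i - b' i := rfl
    rw [this, hza' i hi, hzb' i hi, sub_zero]
  have hdisj' : ∀ i, a' i = 0 ∨ b' i = 0 := by
    intro i
    rcases hdisj i with h | h
    · left; show t * a i = 0; rw [h, mul_zero]
    · right; show t⁻¹ * b i = 0; rw [h, mul_zero]
  have hab' : ⟪a', b'⟫ = 0 := inner_zero_of_disj hdisj'
  have key := near_orth hΦ hε1 hab' hsum hdiff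
  have hinner : ⟪Matrix.toEuclideanLin Φ a', Matrix.toEuclideanLin Φ b'⟫ =
      ⟪Matrix.toEuclideanLin Φ a, Matrix.toEuclideanLin Φ b⟫ := by
    rw [ha', hb', map_smul, map_smul, real_inner_smul_left, real_inner_smul_right,
      ← mul_assoc, mul_inv_cancel₀ (ne_of_gt htpos), one_mul]
  have hna' : ‖a'‖ ^ 2 = ‖a‖ * ‖b‖ := by
    rw [ha', norm_smul, mul_pow, Real.norm_eq_abs, sq_abs, ht2]
    field_simp
  have hnb' : ‖b'‖ ^ 2 = ‖a‖ * ‖b‖ := by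
    rw [hb', norm_smul, mul_pow, Real.norm_eq_abs, sq_abs, inv_pow, ht2]
    field_simp
  rw [hinner, hna', hnb'] at key
  nlinarith [key]

/-- Every vector supported in `I` is mapped into `colSpan Φ I`. -/
lemma map_mem_colSpan {Φ : Matrix (Fin N) (Fin d) ℝ} {I : Finset (Fin d)}
    {y : EuclideanSpace ℝ (Fin d)} (h : ∀ i ∉ I, y i = 0) :
    Matrix.toEuclideanLin Φ y ∈ colSpan Φ I := by
  classical
  have hy : y = ∑ j ∈ I, y j • (EuclideanSpace.single j (1:ℝ)) := by
    ext i
    rw [WithLp.ofLp_sum, Finset.sum_apply]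
    by_cases hiI : i ∈ I
    · rw [Finset.sum_eq_single i]
      · simp
      · intro j hj hji
        have : (EuclideanSpace.single j (1:ℝ)) i = 0 := by
          simp [EuclideanSpace.single_apply, (Ne.symm hji : i ≠ j)]
        show y j * (EuclideanSpace.single j (1:ℝ)) i = 0
        rw [this, mul_zero]
      · intro hiI'; exact (hiI' hiI).elim
    · rw [h i hiI]
      apply (Finset.sum_eq_zero ?_).symm
      intro j hj
      have hji : i ≠ j := fun hh => hiI (hh ▸ hj)
      show y j * (EuclideanSpace.single j (1:ℝ)) i = 0
      simp [EuclideanSpace.single_apply, hji]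
  rw [hy, map_sum]
  apply Submodule.sum_mem
  intro j hj
  rw [map_smul]
  apply Submodule.smul_mem
  apply Submodule.subset_span
  refine ⟨j, hj, ?_⟩
  ext i
  rw [toEL_apply]
  simp [EuclideanSpace.single_apply, mul_ite]

/-- Every element of `colSpan Φ I` is `Φ y` for some `y` supported in `I`. -/
lemma colSpan_rep {Φ : Matrix (Fin N) (Fin d) ℝ} {I : Finset (Fin d)}
    {w : EuclideanSpace ℝ (Fin N)} (hw : w ∈ colSpan Φ I) :
    ∃ y : EuclideanSpace ℝ (Fin d), (∀ i ∉ I, y i = 0) ∧ Matrix.toEuclideanLin Φ y = w := by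
  classical
  refine Submodule.span_induction ?_ ?_ ?_ ?_ hw
  · rintro _ ⟨j, hj, rfl⟩
    refine ⟨EuclideanSpace.single j (1:ℝ), fun i hi => ?_, ?_⟩
    · have hij : i ≠ j := fun hh => hi (hh ▸ hj)
      simp [EuclideanSpace.single_apply, hij]
    · ext i
      rw [toEL_apply]
      simp [EuclideanSpace.single_apply, mul_ite]
  · exact ⟨0, fun i _ => rfl, map_zero _⟩
  · rintro w₁ w₂ _ _ ⟨y₁, hy₁, hΦ₁⟩ ⟨y₂, hy₂, hΦ₂⟩
    refine ⟨y₁ + y₂, fun i hi => ?_, by rw [map_add, hΦ₁, hΦ₂]⟩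
    show y₁ i + y₂ i = 0
    rw [hy₁ i hi, hy₂ i hi, add_zero]
  · rintro c w₁ _ ⟨y₁, hy₁, hΦ₁⟩
    refine ⟨c • y₁, fun i hi => ?_, by rw [map_smul, hΦ₁]⟩
    show c * y₁ i = 0
    rw [hy₁ i hi, mul_zero]

lemma arith1 {ε A B C : ℝ} (hε : 0 < ε) (hε1 : ε ≤ 1) (hA : 0 < A) (hB : 0 ≤ B)
    (hC : 0 ≤ C) (h1 : A ^ 2 ≤ 2 * ε * B * C) (h2 : (1 - ε) * C ≤ A) :
    (1 - ε) * A ≤ 2 * ε * B := by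
  nlinarith [mul_le_mul_of_nonneg_left h2 (by positivity : (0:ℝ) ≤ 2 * ε * B),
    mul_nonneg (mul_nonneg hε.le hB) hC]

lemma arith2 {ε A B : ℝ} (hε : 0 < ε) (hε' : ε ≤ 0.03) (hA : 0 ≤ A) (hB : 0 ≤ B)
    (h5 : (1 - ε) * A ≤ 2 * ε * B) : (1 + ε) * A ≤ 2.4 * ε * B := by
  nlinarith [mul_nonneg hε.le hB,
    mul_le_mul_of_nonneg_left h5 (by linarith : (0:ℝ) ≤ 1 + ε)]

end NVaux

/-- Approximation of the observation: under RIC with parameters `(2n, ε)`, `0 < ε ≤ 0.03`,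
with `x = Φv`, `F = range(Φ_I)`, `r = P_{F^⊥} x`, `v₀ = v|_{supp(v)∖I}`, `x₀ = Φv₀`,
`u₀ = Φ*x₀`, `u = Φ*r`, one has `‖(u₀ − u)|_T‖₂ ≤ 2.4 ε ‖v₀‖₂` for every `T` with
`|T| ≤ 2n`. -/
theorem approximation_of_observation {N d n : ℕ} (Φ : Matrix (Fin N) (Fin d) ℝ)
    (ε : ℝ) (hε : 0 < ε) (hε' : ε ≤ 0.03) (hΦ : RIC Φ (2 * n) ε)
    (v : EuclideanSpace ℝ (Fin d)) (hv : msparse n v)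
    (I : Finset (Fin d)) (hI : (suppF v ∪ I).card ≤ 2 * n)
    (x r x₀ : EuclideanSpace ℝ (Fin N)) (v₀ u₀ u : EuclideanSpace ℝ (Fin d))
    (hx : x = Matrix.toEuclideanLin Φ v)
    (hr : r = (Submodule.orthogonalProjection (colSpan Φ I)ᗮ x : EuclideanSpace ℝ (Fin N)))
    (hv₀ : v₀ = restr (suppF v \ I) v)
    (hx₀ : x₀ = Matrix.toEuclideanLin Φ v₀)
    (hu₀ : u₀ = Matrix.toEuclideanLin Φ.transpose x₀)
    (hu : u = Matrix.toEuclideanLin Φ.transpose r)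
    (T : Finset (Fin d)) (hT : T.card ≤ 2 * n) :
    ‖restr T (u₀ - u)‖ ≤ 2.4 * ε * ‖v₀‖ := by
  classical
  set F := colSpan Φ I with hF
  -- v = v₀ + restr I v
  have hvsplit : v - v₀ = restr I v := by
    ext i
    show v i - v₀ i = restr I v i
    rw [hv₀]
    by_cases hiI : i ∈ I
    · have : i ∉ suppF v \ I := fun hh => (Finset.mem_sdiff.1 hh).2 hiI
      simp [restr, this, hiI]
    · by_cases hvi : v i = 0
      · have : restr (suppF v \ I) v i = 0 := by
          unfold restr; show (if i ∈ suppF v \ I then v i else 0) = 0; split <;> simp [hvi]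
        simp [restr, this, hiI, hvi]
      · have hmem : i ∈ suppF v \ I := by
          simp [suppF, Finset.mem_sdiff, Finset.mem_filter, hvi, hiI]
        simp [restr, hmem, hiI, -Finset.mem_sdiff]
  -- x − x₀ ∈ F
  have hxx₀ : x - x₀ ∈ F := by
    rw [hx, hx₀, ← map_sub, hvsplit]
    exact NVaux.map_mem_colSpan (NVaux.restr_zero_off v)
  -- r = P_{F⊥} x₀
  have hr' : r = (Submodule.orthogonalProjection Fᗮ x₀ : EuclideanSpace ℝ (Fin N)) := by
    have hx' : x = x₀ + (x - x₀) := by abel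
    have hz : Submodule.orthogonalProjection Fᗮ (x - x₀) = 0 :=
      Submodule.orthogonalProjectionOnto_apply_of_mem_orthogonal (F.le_orthogonal_orthogonal hxx₀)
    rw [hr, hx', map_add, hz]
    simp
  set p : EuclideanSpace ℝ (Fin N) := x₀ - r with hp
  -- p ∈ F, r ∈ Fᗮ
  have hpF : p ∈ F := by
    have h1 : x₀ - (Submodule.orthogonalProjection Fᗮ x₀ : EuclideanSpace ℝ (Fin N)) ∈ Fᗮᗮ :=
      Submodule.sub_starProjection_mem_orthogonal (K := Fᗮ) x₀
    rw [Submodule.orthogonal_orthogonal] at h1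
    rw [hp, hr']; exact h1
  have hrF : r ∈ Fᗮ := by rw [hr]; exact (Submodule.orthogonalProjection Fᗮ x).2
  -- ‖p‖² = ⟪x₀, p⟫
  have hinner_rp : ⟪p, r⟫ = 0 := hrF p hpF
  have hnorm_p : ‖p‖ ^ 2 = ⟪x₀, p⟫ := by
    have hx₀' : x₀ = p + r := by rw [hp]; abel
    rw [hx₀', inner_add_left, real_inner_self_eq_norm_sq, real_inner_comm p r, hinner_rp,
      add_zero]
  -- representation of p
  obtain ⟨y, hyI, hyΦ⟩ := NVaux.colSpan_rep (Φ := Φ) (I := I) hpF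
  -- disjointness of v₀ and y
  have hdisj : ∀ i, v₀ i = 0 ∨ y i = 0 := by
    intro i
    by_cases hiI : i ∈ I
    · left
      rw [hv₀]
      have : i ∉ suppF v \ I := fun hh => (Finset.mem_sdiff.1 hh).2 hiI
      simp [restr, this, -Finset.mem_sdiff]
    · right; exact hyI i hiI
  have hε1 : ε ≤ 1 := by linarith
  -- support cards
  have hsupp_sub : suppF v₀ ∪ suppF y ⊆ suppF v ∪ I := by
    intro i hi
    rcases Finset.mem_union.1 hi with h | h
    · simp only [suppF, Finset.mem_filter, Finset.mem_univ, true_and] at h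
      rw [hv₀] at h
      by_cases hiS : i ∈ suppF v \ I
      · exact Finset.mem_union.2 (Or.inl (Finset.mem_sdiff.1 hiS).1)
      · exact absurd (by simp [restr, hiS, -Finset.mem_sdiff]) h
    · simp only [suppF, Finset.mem_filter, Finset.mem_univ, true_and] at h
      by_contra hc
      exact h (hyI i (fun hh => hc (Finset.mem_union.2 (Or.inr hh))))
  have hcard : (suppF v₀ ∪ suppF y).card ≤ 2 * n :=
    le_trans (Finset.card_le_card hsupp_sub) hI
  -- key estimate: ⟪Φv₀, Φy⟫ ≤ 2ε‖v₀‖‖y‖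
  have hkey : ⟪Matrix.toEuclideanLin Φ v₀, Matrix.toEuclideanLin Φ y⟫ ≤
      2 * ε * ‖v₀‖ * ‖y‖ := NVaux.near_orth' hΦ hε hε1 hdisj hcard
  have hp2 : ‖p‖ ^ 2 ≤ 2 * ε * ‖v₀‖ * ‖y‖ := by
    rw [hnorm_p, hx₀, ← hyΦ]; exact hkey
  -- y is 2n-sparse
  have hImem : I ⊆ suppF v ∪ I := Finset.subset_union_right
  have hysp : msparse (2 * n) y :=
    NVaux.msparse_of_zero_off hyI (le_trans (Finset.card_le_card hImem) hI)
  have hylb : (1 - ε) * ‖y‖ ≤ ‖p‖ := by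
    have := (hΦ y hysp).1
    rwa [hyΦ] at this
  -- u₀ − u = Φᵀ p
  have huu : u₀ - u = Matrix.toEuclideanLin Φ.transpose p := by
    rw [hu₀, hu, hp, map_sub]
  have hB : ‖restr T (u₀ - u)‖ ≤ (1 + ε) * ‖p‖ := by
    rw [huu]; exact NVaux.restr_transpose_bound hΦ hε p T hT
  -- conclude
  by_cases hp0 : ‖p‖ = 0
  · rw [hp0, mul_zero] at hB
    have : (0:ℝ) ≤ 2.4 * ε * ‖v₀‖ := by positivity
    linarith
  · have hppos : 0 < ‖p‖ := lt_of_le_of_ne (norm_nonneg p) (Ne.symm hp0)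
    have h5 : (1 - ε) * ‖p‖ ≤ 2 * ε * ‖v₀‖ :=
      NVaux.arith1 hε hε1 hppos (norm_nonneg v₀) (norm_nonneg y) hp2 hylb
    have h6 : (1 + ε) * ‖p‖ ≤ 2.4 * ε * ‖v₀‖ :=
      NVaux.arith2 hε hε' (norm_nonneg p) (norm_nonneg v₀) h5
    linarith [hB, h6]
end
end

section
/- (Localizing the energy.) Assume the N×d real matrix Φ satisfies the Restricted Isometry Condition with parameters (2n, ε), where 0 < ε ≤ 0.03. Let v ∈ ℝ^d be n-sparse and let I ⊆ {1,…,d} satisfy |supp(v) ∪ I| ≤ 2n. Set x = Φv, F = range(Φ_I), r = P_{F^⊥} x, v₀ = v|_{supp(v)∖I}, and u = Φ*r. Let J ⊆ {1,…,d} be a set of biggest coordinates of u, i.e. J ⊆ supp(u), |u(i)| ≥ |u(j)| for all i ∈ J and j ∉ J, and |J| = min(n, |supp(u)|). Then ‖u|_J‖₂ ≥ 0.8 ‖v₀‖₂. -/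
open Finset

noncomputable section

section AuxLemmas
open RealInnerProductSpace

variable {N d : ℕ}

lemma app_eq (Φ : Matrix (Fin N) (Fin d) ℝ) (w : EuclideanSpace ℝ (Fin d)) (i : Fin N) :
    Matrix.toEuclideanLin Φ w i = ∑ j, Φ i j * w j := rfl

lemma euclid_inner_eq {k : ℕ} (x y : EuclideanSpace ℝ (Fin k)) : ⟪x, y⟫ = ∑ i, x i * y i := by
  simp [PiLp.inner_apply, RCLike.inner_apply, mul_comm]

lemma euclid_norm_sq {k : ℕ} (x : EuclideanSpace ℝ (Fin k)) : ‖x‖^2 = ∑ i, (x i)^2 := by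
  rw [← real_inner_self_eq_norm_sq]
  rw [euclid_inner_eq]; simp [sq]

lemma mem_suppF {w : EuclideanSpace ℝ (Fin d)} {i : Fin d} : i ∈ suppF w ↔ w i ≠ 0 := by
  simp [suppF]

lemma restr_norm_sq (S : Finset (Fin d)) (w : EuclideanSpace ℝ (Fin d)) :
    ‖restr S w‖^2 = ∑ i ∈ S, (w i)^2 := by
  rw [euclid_norm_sq]
  have h : ∀ i, (restr S w i)^2 = if i ∈ S then (w i)^2 else 0 := by
    intro i; unfold restr; split <;> simp_all
  simp_rw [h]
  simp [Finset.sum_ite_mem]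

lemma toLin_single (Φ : Matrix (Fin N) (Fin d) ℝ) (j : Fin d) :
    Matrix.toEuclideanLin Φ (EuclideanSpace.single j 1) =
      (WithLp.toLp 2 (fun i => Φ i j) : EuclideanSpace ℝ (Fin N)) := by
  ext i
  rw [app_eq]
  simp [EuclideanSpace.single_apply, mul_ite]

lemma eq_sum_single (w : EuclideanSpace ℝ (Fin d)) :
    w = ∑ j ∈ suppF w, (w j) • EuclideanSpace.single j (1:ℝ) := by
  ext i
  rw [WithLp.ofLp_sum, Finset.sum_apply]
  have : ∀ j ∈ suppF w, (w j • EuclideanSpace.single j (1:ℝ)) i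
      = if j = i then w j else 0 := by
    intro j _
    have : (w j • EuclideanSpace.single j (1:ℝ)) i = w j * (if i = j then 1 else 0) := by
      rw [PiLp.smul_apply, EuclideanSpace.single_apply, smul_eq_mul]
    rw [this]
    by_cases h : i = j <;> simp [h, eq_comm]
  rw [Finset.sum_congr rfl this, Finset.sum_ite_eq' (suppF w) i (fun j => w j)]
  by_cases h : i ∈ suppF w
  · simp [h]
  · simp [h]
    exact not_not.mp (by simpa [mem_suppF] using h)

lemma toLin_mem_colSpan (Φ : Matrix (Fin N) (Fin d) ℝ) {S : Finset (Fin d)}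
    {w : EuclideanSpace ℝ (Fin d)} (h : suppF w ⊆ S) :
    Matrix.toEuclideanLin Φ w ∈ colSpan Φ S := by
  have hrep : Matrix.toEuclideanLin Φ w
      = ∑ j ∈ suppF w, w j • Matrix.toEuclideanLin Φ (EuclideanSpace.single j 1) := by
    conv_lhs => rw [eq_sum_single w]
    rw [map_sum]
    simp_rw [map_smul]
  rw [hrep]
  apply Submodule.sum_mem
  intro j hj
  apply Submodule.smul_mem
  rw [toLin_single]
  exact Submodule.subset_span ⟨j, h hj, rfl⟩

lemma suppF_single (j : Fin d) : suppF (EuclideanSpace.single j (1:ℝ)) ⊆ {j} := by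
  intro i hi
  rw [mem_suppF, EuclideanSpace.single_apply] at hi
  simp only [Finset.mem_singleton]
  by_contra h
  exact hi (by simp [h])

lemma colSpan_mem (Φ : Matrix (Fin N) (Fin d) ℝ) {S : Finset (Fin d)}
    {y : EuclideanSpace ℝ (Fin N)} (h : y ∈ colSpan Φ S) :
    ∃ w : EuclideanSpace ℝ (Fin d), suppF w ⊆ S ∧ Matrix.toEuclideanLin Φ w = y := by
  induction h using Submodule.span_induction with
  | mem y hy =>
    obtain ⟨j, hj, rfl⟩ := hy
    exact ⟨EuclideanSpace.single j 1,
      fun i hi => by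
        have := suppF_single j hi
        simp only [Finset.mem_singleton] at this
        subst this; exact hj,
      toLin_single Φ j⟩
  | zero => exact ⟨0, by simp [suppF], by simp⟩
  | add a b ha hb iha ihb =>
    obtain ⟨w₁, hs₁, hw₁⟩ := iha
    obtain ⟨w₂, hs₂, hw₂⟩ := ihb
    refine ⟨w₁ + w₂, ?_, by rw [map_add, hw₁, hw₂]⟩
    intro i hi
    rw [mem_suppF] at hi
    have : w₁ i ≠ 0 ∨ w₂ i ≠ 0 := by
      by_contra hc
      push_neg at hc
      exact hi (by show w₁ i + w₂ i = 0; rw [hc.1, hc.2]; ring)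
    rcases this with h' | h'
    · exact hs₁ (mem_suppF.mpr h')
    · exact hs₂ (mem_suppF.mpr h')
  | smul c a ha iha =>
    obtain ⟨w₁, hs₁, hw₁⟩ := iha
    refine ⟨c • w₁, ?_, by rw [map_smul, hw₁]⟩
    intro i hi
    rw [mem_suppF] at hi
    apply hs₁
    rw [mem_suppF]
    intro h0
    exact hi (by show c * w₁ i = 0; rw [h0]; ring)

lemma sum_sq_le_of_bigger {n : ℕ} {u : EuclideanSpace ℝ (Fin d)} {J T : Finset (Fin d)}
    (hJsupp : J ⊆ suppF u) (hJbig : ∀ i ∈ J, ∀ j ∉ J, |u j| ≤ |u i|)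
    (hJcard : J.card = min n (suppF u).card) (hT : T.card ≤ n) :
    ∑ i ∈ T, (u i)^2 ≤ ∑ i ∈ J, (u i)^2 := by
  have key : ∑ i ∈ T \ J, (u i)^2 ≤ ∑ i ∈ J \ T, (u i)^2 := by
    by_cases hz : ∀ j ∈ T \ J, u j = 0
    · have h0 : ∑ i ∈ T \ J, (u i)^2 = 0 :=
        Finset.sum_eq_zero (fun j hj => by rw [hz j hj]; ring)
      rw [h0]
      positivity
    · push_neg at hz
      obtain ⟨j₀, hj₀, hj₀ne⟩ := hz
      have hJn : J.card = n := by
        rcases Nat.le_total n (suppF u).card with h | h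
        · rw [hJcard, min_eq_left h]
        · exfalso
          have hcardeq : J.card = (suppF u).card := by rw [hJcard, min_eq_right h]
          have hJeq : J = suppF u := Finset.eq_of_subset_of_card_le hJsupp hcardeq.symm.le
          have hmem : j₀ ∈ suppF u := mem_suppF.mpr hj₀ne
          rw [← hJeq] at hmem
          exact (Finset.mem_sdiff.mp hj₀).2 hmem
      have hcard : (T \ J).card ≤ (J \ T).card := by
        have h1 := Finset.card_sdiff_add_card_inter T J
        have h2 := Finset.card_sdiff_add_card_inter J T
        rw [Finset.inter_comm] at h2
        omega
      have hne : (J \ T).Nonempty := by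
        rw [← Finset.card_pos]
        have : 0 < (T \ J).card := Finset.card_pos.mpr ⟨j₀, hj₀⟩
        omega
      obtain ⟨i₀, hi₀, hci⟩ := Finset.exists_mem_eq_inf' hne (fun i => (u i)^2)
      have hTc : ∀ j ∈ T \ J, (u j)^2 ≤ (J \ T).inf' hne (fun i => (u i)^2) := by
        intro j hj
        rw [hci]
        have hb := hJbig i₀ ((Finset.mem_sdiff.mp hi₀).1) j (Finset.mem_sdiff.mp hj).2
        calc (u j)^2 = |u j|^2 := (sq_abs _).symm
          _ ≤ |u i₀|^2 := by gcongr
          _ = (u i₀)^2 := sq_abs _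
      have hc0 : 0 ≤ (J \ T).inf' hne (fun i => (u i)^2) := by rw [hci]; positivity
      calc ∑ j ∈ T \ J, (u j)^2
          ≤ (T \ J).card • (J \ T).inf' hne (fun i => (u i)^2) :=
            Finset.sum_le_card_nsmul _ _ _ hTc
        _ ≤ (J \ T).card • (J \ T).inf' hne (fun i => (u i)^2) :=
            nsmul_le_nsmul_left hc0 hcard
        _ ≤ ∑ i ∈ J \ T, (u i)^2 :=
            Finset.card_nsmul_le_sum _ _ _ (fun i hi => Finset.inf'_le _ hi)
  have e1 : ∑ i ∈ T ∩ J, (u i)^2 + ∑ i ∈ T \ J, (u i)^2 = ∑ i ∈ T, (u i)^2 :=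
    Finset.sum_inter_add_sum_sdiff T J _
  have e2 : ∑ i ∈ J ∩ T, (u i)^2 + ∑ i ∈ J \ T, (u i)^2 = ∑ i ∈ J, (u i)^2 :=
    Finset.sum_inter_add_sum_sdiff J T _
  rw [Finset.inter_comm] at e2
  linarith

end AuxLemmas

open RealInnerProductSpace in
set_option maxHeartbeats 1000000 in
/-- Localizing the energy: under RIC with parameters `(2n, ε)`, `0 < ε ≤ 0.03`, with
`x = Φv`, `F = range(Φ_I)`, `r = P_{F^⊥} x`, `v₀ = v|_{supp(v)∖I}`, `u = Φ*r`, and `J`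
a set of `min(n, |supp(u)|)` biggest coordinates of `u`, one has
`‖u|_J‖₂ ≥ 0.8 ‖v₀‖₂`. -/
theorem localizing_the_energy {N d n : ℕ} (Φ : Matrix (Fin N) (Fin d) ℝ)
    (ε : ℝ) (hε : 0 < ε) (hε' : ε ≤ 0.03) (hΦ : RIC Φ (2 * n) ε)
    (v : EuclideanSpace ℝ (Fin d)) (hv : msparse n v)
    (I : Finset (Fin d)) (hI : (suppF v ∪ I).card ≤ 2 * n)
    (x r : EuclideanSpace ℝ (Fin N)) (v₀ u : EuclideanSpace ℝ (Fin d))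
    (hx : x = Matrix.toEuclideanLin Φ v)
    (hr : r = (Submodule.orthogonalProjection (colSpan Φ I)ᗮ x : EuclideanSpace ℝ (Fin N)))
    (hv₀ : v₀ = restr (suppF v \ I) v)
    (hu : u = Matrix.toEuclideanLin Φ.transpose r)
    (J : Finset (Fin d)) (hJsupp : J ⊆ suppF u)
    (hJbig : ∀ i ∈ J, ∀ j ∉ J, |u j| ≤ |u i|)
    (hJcard : J.card = min n (suppF u).card) :
    0.8 * ‖v₀‖ ≤ ‖restr J u‖ := by
  set F := colSpan Φ I with hF
  set T : Finset (Fin d) := suppF v \ I with hTdef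
  -- r ∈ Fᗮ and x - r ∈ F
  have hrF : r ∈ Fᗮ := by rw [hr]; exact SetLike.coe_mem _
  have hxr : x - r ∈ F := by
    rw [hr]
    have h := Submodule.sub_starProjection_mem_orthogonal (K := Fᗮ) x
    rwa [Submodule.orthogonal_orthogonal] at h
  obtain ⟨w₁, hw₁S, hw₁⟩ := colSpan_mem Φ hxr
  set w : EuclideanSpace ℝ (Fin d) := w₁ - (v - v₀) with hw
  have hsuppw : suppF w ⊆ I := by
    intro i hi
    rw [mem_suppF] at hi
    by_contra hiI
    apply hi
    have h1 : w₁ i = 0 := by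
      by_contra h; exact hiI (hw₁S (mem_suppF.mpr h))
    have h2 : v i - v₀ i = 0 := by
      rw [hv₀]
      unfold restr
      by_cases hiT : i ∈ T
      · simp [hiT]
      · have hvi : v i = 0 := by
          by_contra h
          exact hiT (Finset.mem_sdiff.mpr ⟨mem_suppF.mpr h, hiI⟩)
        simp [hiT, hvi]
    show w₁ i - (v i - v₀ i) = 0
    rw [h1, h2]; ring
  have hrfeq : r = Matrix.toEuclideanLin Φ (v₀ - w) := by
    have hvw : v₀ - w = v - w₁ := by rw [hw]; abel
    rw [hvw, map_sub, ← hx, hw₁]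
    abel
  -- sparsity
  have hsuppv₀ : suppF v₀ ⊆ T := by
    intro i hi
    rw [mem_suppF, hv₀] at hi
    unfold restr at hi
    by_contra h
    simp [h] at hi
  have hsparse : msparse (2*n) (v₀ - w) := by
    show (Finset.univ.filter fun i => (v₀ - w) i ≠ 0).card ≤ 2*n
    have hsub : (Finset.univ.filter fun i => (v₀ - w) i ≠ 0) ⊆ suppF v ∪ I := by
      intro i hi
      simp only [Finset.mem_filter] at hi
      have : v₀ i ≠ 0 ∨ w i ≠ 0 := by
        by_contra hc
        push_neg at hc
        exact hi.2 (by show v₀ i - w i = 0; rw [hc.1, hc.2]; ring)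
      rcases this with h' | h'
      · have := hsuppv₀ (mem_suppF.mpr h')
        rw [hTdef] at this
        exact Finset.mem_union_left _ (Finset.mem_sdiff.mp this).1
      · exact Finset.mem_union_right _ (hsuppw (mem_suppF.mpr h'))
    exact le_trans (Finset.card_le_card hsub) hI
  have hRIC := (hΦ _ hsparse).1
  -- orthogonality of v₀ and w
  have hvw0 : ⟪v₀, w⟫ = 0 := by
    rw [euclid_inner_eq]
    apply Finset.sum_eq_zero
    intro i _
    by_cases hiI : i ∈ I
    · have hv0 : v₀ i = 0 := by
        by_contra h
        exact (Finset.mem_sdiff.mp (hTdef ▸ hsuppv₀ (mem_suppF.mpr h))).2 hiI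
      rw [hv0]; ring
    · have hw0 : w i = 0 := by
        by_contra h
        exact hiI (hsuppw (mem_suppF.mpr h))
      rw [hw0]; ring
  have hnorm_sub : ‖v₀‖ ≤ ‖v₀ - w‖ := by
    have h := norm_sub_sq_real v₀ w
    rw [hvw0] at h
    nlinarith [norm_nonneg (v₀ - w), norm_nonneg v₀, sq_nonneg ‖w‖]
  have hε1 : (0:ℝ) ≤ 1 - ε := by norm_num at hε' ⊢; linarith
  have hr_lb : (1-ε) * ‖v₀‖ ≤ ‖r‖ := by
    calc (1-ε)*‖v₀‖ ≤ (1-ε)*‖v₀-w‖ := by gcongr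
      _ ≤ ‖Matrix.toEuclideanLin Φ (v₀-w)‖ := hRIC
      _ = ‖r‖ := by rw [← hrfeq]
  -- inner product identity
  have hΦw_mem : Matrix.toEuclideanLin Φ w ∈ F := toLin_mem_colSpan Φ hsuppw
  have hinner_r : ⟪Matrix.toEuclideanLin Φ v₀, r⟫ = ‖r‖^2 := by
    have hdec : Matrix.toEuclideanLin Φ v₀ = r + Matrix.toEuclideanLin Φ w := by
      rw [hrfeq, ← map_add]
      congr 1
      abel
    rw [hdec, inner_add_left]
    have h0 : ⟪Matrix.toEuclideanLin Φ w, r⟫ = 0 :=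
      (Submodule.mem_orthogonal F r).mp hrF _ hΦw_mem
    rw [h0, real_inner_self_eq_norm_sq]
    ring
  -- adjoint
  have hadj : ⟪u, v₀⟫ = ⟪Matrix.toEuclideanLin Φ v₀, r⟫ := by
    rw [hu, euclid_inner_eq, euclid_inner_eq]
    simp_rw [app_eq, Finset.sum_mul]
    rw [Finset.sum_comm]
    apply Finset.sum_congr rfl
    intro i _
    apply Finset.sum_congr rfl
    intro j _
    rw [Matrix.transpose_apply]
    ring
  -- Cauchy-Schwarz with restriction to T
  have hCS : ⟪u, v₀⟫ ≤ ‖restr T u‖ * ‖v₀‖ := by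
    have heq : ⟪u, v₀⟫ = ⟪restr T u, v₀⟫ := by
      rw [euclid_inner_eq, euclid_inner_eq]
      apply Finset.sum_congr rfl
      intro i _
      by_cases hiT : i ∈ T
      · show u i * v₀ i = (if i ∈ T then u i else 0) * v₀ i
        simp [hiT]
      · have hv0 : v₀ i = 0 := by
          by_contra h
          exact hiT (hsuppv₀ (mem_suppF.mpr h))
        show u i * v₀ i = (if i ∈ T then u i else 0) * v₀ i
        rw [hv0]; ring
    rw [heq]
    exact real_inner_le_norm _ _
  -- comparison of J and T sums
  have hTn : T.card ≤ n :=
    le_trans (Finset.card_le_card (Finset.sdiff_subset)) hv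
  have hcomp : ‖restr T u‖ ≤ ‖restr J u‖ := by
    have h2 := sum_sq_le_of_bigger hJsupp hJbig hJcard hTn
    have e1 := restr_norm_sq T u
    have e2 := restr_norm_sq J u
    nlinarith [norm_nonneg (restr T u), norm_nonneg (restr J u)]
  have hfin : ‖r‖^2 ≤ ‖restr J u‖ * ‖v₀‖ := by
    calc ‖r‖^2 = ⟪u, v₀⟫ := by rw [hadj, hinner_r]
      _ ≤ ‖restr T u‖ * ‖v₀‖ := hCS
      _ ≤ ‖restr J u‖ * ‖v₀‖ := by gcongr
  have h1 : ((1-ε)*‖v₀‖)^2 ≤ ‖r‖^2 := by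
    nlinarith [mul_nonneg hε1 (norm_nonneg v₀), hr_lb, norm_nonneg r]
  have hkey : (1-ε)^2 * ‖v₀‖^2 ≤ ‖restr J u‖ * ‖v₀‖ := by
    calc (1-ε)^2 * ‖v₀‖^2 = ((1-ε)*‖v₀‖)^2 := by ring
      _ ≤ ‖r‖^2 := h1
      _ ≤ ‖restr J u‖ * ‖v₀‖ := hfin
  rcases eq_or_lt_of_le (norm_nonneg v₀) with h0 | h0
  · rw [← h0]
    simp [norm_nonneg]
  · have h97 : (0.97:ℝ) ≤ 1 - ε := by norm_num at hε' ⊢; linarith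
    have h2 : (0.9409:ℝ) ≤ (1-ε)^2 := by nlinarith [h97]
    have h3 : (0.9409:ℝ) * ‖v₀‖^2 ≤ ‖restr J u‖ * ‖v₀‖ := by
      nlinarith [mul_le_mul_of_nonneg_right h2 (sq_nonneg ‖v₀‖), hkey]
    nlinarith [h3, mul_pos h0 h0]
end
end
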